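/- arXiv:1608.07227 — 13 statements merged into one kernel-verified Lean document; each statement's English description precedes it below -/
import Mathlib

section
/- For any natural number n and complex numbers ρ, θ with |ρ| < 1, |θρ| < 1, θ ≠ 1, the double series ∑_{j=0}^∞ ∑_{k=0}^{n+j} (min(n,j,k,n+j-k)+1) ρ^j θ^k converges and equals (1 - θ^{n+1}) / ((1-θ)(1-ρ)(1-θρ)). -/
open Finset

lemma inner_eq (n j : ℕ) (θ : ℂ) :
    ∑ k ∈ Finset.range (n + j + 1),
        ((min (min n j) (min k (n + j - k)) + 1 : ℕ) : ℂ) * θ ^ k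
      = (∑ a ∈ Finset.range (n + 1), θ ^ a) * (∑ b ∈ Finset.range (j + 1), θ ^ b) := by
  have key : ∀ k ∈ Finset.range (n + j + 1),
      ((min (min n j) (min k (n + j - k)) + 1 : ℕ) : ℂ) * θ ^ k
        = ∑ a ∈ Finset.range (n + 1), if a ≤ k ∧ k ≤ a + j then θ ^ k else 0 := by
    intro k hk
    rw [Finset.mem_range] at hk
    rw [Finset.sum_ite, Finset.sum_const, Finset.sum_const_zero, add_zero, nsmul_eq_mul]
    congr 1
    have hset : (Finset.range (n+1)).filter (fun a => a ≤ k ∧ k ≤ a + j)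
        = Finset.Icc (k - j) (min n k) := by
      ext a
      simp only [Finset.mem_filter, Finset.mem_range, Finset.mem_Icc]
      omega
    rw [hset, Nat.card_Icc]
    norm_cast
    omega
  rw [Finset.sum_congr rfl key, Finset.sum_comm, Finset.sum_mul_sum]
  apply Finset.sum_congr rfl
  intro a ha
  rw [Finset.mem_range] at ha
  have hset : (Finset.range (n+j+1)).filter (fun k => a ≤ k ∧ k ≤ a + j)
      = (Finset.range (j+1)).image (fun b => a + b) := by
    ext k
    simp only [Finset.mem_filter, Finset.mem_range, Finset.mem_image]
    constructor
    · intro h; exact ⟨k - a, by omega, by omega⟩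
    · rintro ⟨b, hb, rfl⟩; omega
  rw [Finset.sum_ite, Finset.sum_const_zero, add_zero, hset,
    Finset.sum_image (by intro x _ y _ h; simp only at h; omega)]
  exact Finset.sum_congr rfl fun b _ => pow_add θ a b

theorem stmt_1 (n : ℕ) (ρ θ : ℂ) (hρ : ‖ρ‖ < 1)
    (hθρ : ‖θ * ρ‖ < 1) (hθ : θ ≠ 1) :
    HasSum (fun j : ℕ => ∑ k ∈ Finset.range (n + j + 1),
        ((min (min n j) (min k (n + j - k)) + 1 : ℕ) : ℂ) * ρ ^ j * θ ^ k)
      ((1 - θ ^ (n + 1)) / ((1 - θ) * (1 - ρ) * (1 - θ * ρ))) := by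
  have hθ1 : (1 : ℂ) - θ ≠ 0 := fun h => hθ (by linear_combination -h)
  have hρ1 : (1 : ℂ) - ρ ≠ 0 := by
    intro h
    have : ρ = 1 := by linear_combination -h
    rw [this] at hρ; simp at hρ
  have hθρ1 : (1 : ℂ) - θ * ρ ≠ 0 := by
    intro h
    have : θ * ρ = 1 := by linear_combination -h
    rw [this] at hθρ; simp at hθρ
  have h1 : HasSum (fun j : ℕ => ρ ^ j) (1 - ρ)⁻¹ :=
    hasSum_geometric_of_norm_lt_one (by simpa using hρ)
  have h2 : HasSum (fun j : ℕ => (θ * ρ) ^ j) (1 - θ * ρ)⁻¹ :=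
    hasSum_geometric_of_norm_lt_one (by simpa using hθρ)
  have h3 := (h1.sub (h2.mul_left θ)).mul_left ((1 - θ ^ (n + 1)) / ((1 - θ) * (1 - θ)))
  have hfun : ∀ j : ℕ, ∑ k ∈ Finset.range (n + j + 1),
        ((min (min n j) (min k (n + j - k)) + 1 : ℕ) : ℂ) * ρ ^ j * θ ^ k
      = (1 - θ ^ (n + 1)) / ((1 - θ) * (1 - θ)) * (ρ ^ j - θ * (θ * ρ) ^ j) := by
    intro j
    have h4 : ∑ k ∈ Finset.range (n + j + 1),
        ((min (min n j) (min k (n + j - k)) + 1 : ℕ) : ℂ) * ρ ^ j * θ ^ k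
      = (∑ a ∈ Finset.range (n + 1), θ ^ a) * (∑ b ∈ Finset.range (j + 1), θ ^ b) * ρ ^ j := by
      rw [← inner_eq n j θ, Finset.sum_mul]
      exact Finset.sum_congr rfl fun k _ => by ring
    have hθ2 : θ - 1 ≠ 0 := sub_ne_zero.mpr hθ
    rw [h4, geom_sum_eq hθ, geom_sum_eq hθ]
    field_simp [hθ1, hθ2]
    ring
  have hval : (1 - θ ^ (n + 1)) / ((1 - θ) * (1 - θ)) * ((1 - ρ)⁻¹ - θ * (1 - θ * ρ)⁻¹)
      = (1 - θ ^ (n + 1)) / ((1 - θ) * (1 - ρ) * (1 - θ * ρ)) := by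
    field_simp
    ring
  rw [show (fun j : ℕ => ∑ k ∈ Finset.range (n + j + 1),
        ((min (min n j) (min k (n + j - k)) + 1 : ℕ) : ℂ) * ρ ^ j * θ ^ k)
      = fun j : ℕ => (1 - θ ^ (n + 1)) / ((1 - θ) * (1 - θ)) * (ρ ^ j - θ * (θ * ρ) ^ j)
      from funext hfun]
  rw [← hval]
  exact h3
end

section
/- For natural numbers j, k, l, n with j + k - l = n (i.e., n + l = j + k), the integral (2/π) ∫₀^π (sin((j+1)x) sin((k+1)x) sin((l+1)x) sin((n+1)x)) / sin²x dx equals min(j, k, l, n) + 1. -/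
open Finset

lemma integral_cos_int (m : ℤ) :
    ∫ x in (0:ℝ)..Real.pi, Real.cos ((m:ℝ) * x) = if m = 0 then Real.pi else 0 := by
  rcases eq_or_ne m 0 with rfl | hm
  · simp
  · rw [if_neg hm]
    have hm' : (m:ℝ) ≠ 0 := Int.cast_ne_zero.mpr hm
    rw [intervalIntegral.integral_comp_mul_left Real.cos hm']
    simp [Real.sin_int_mul_pi]

lemma prod4 (A B C D : ℝ) :
    Real.cos A * Real.cos B * Real.sin C * Real.sin D
    = (Real.cos (A+B+C-D) + Real.cos (A+B-C+D) + Real.cos (A-B+C-D) + Real.cos (A-B-C+D)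
     - Real.cos (A+B+C+D) - Real.cos (A+B-C-D) - Real.cos (A-B+C+D) - Real.cos (A-B-C-D))/8 := by
  simp only [Real.cos_add, Real.cos_sub, Real.sin_add, Real.sin_sub]
  ring

noncomputable def I0 (m : ℤ) : ℝ := if m = 0 then Real.pi else 0

lemma cos_int_intervalIntegrable (m : ℤ) :
    IntervalIntegrable (fun x => Real.cos ((m:ℝ) * x)) MeasureTheory.volume 0 Real.pi :=
  (Real.continuous_cos.comp (continuous_const.mul continuous_id)).intervalIntegrable _ _

lemma term_integral (a b c d : ℤ) :
    (∫ x in (0:ℝ)..Real.pi,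
      Real.cos ((a:ℝ)*x) * Real.cos ((b:ℝ)*x) * Real.sin ((c:ℝ)*x) * Real.sin ((d:ℝ)*x))
    = (I0 (a+b+c-d) + I0 (a+b-c+d) + I0 (a-b+c-d) + I0 (a-b-c+d)
     - I0 (a+b+c+d) - I0 (a+b-c-d) - I0 (a-b+c+d) - I0 (a-b-c-d))/8 := by
  have key : ∀ x : ℝ, Real.cos ((a:ℝ)*x) * Real.cos ((b:ℝ)*x) * Real.sin ((c:ℝ)*x) * Real.sin ((d:ℝ)*x)
      = (Real.cos (((a+b+c-d:ℤ):ℝ)*x) + Real.cos (((a+b-c+d:ℤ):ℝ)*x)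
        + Real.cos (((a-b+c-d:ℤ):ℝ)*x) + Real.cos (((a-b-c+d:ℤ):ℝ)*x)
        - Real.cos (((a+b+c+d:ℤ):ℝ)*x) - Real.cos (((a+b-c-d:ℤ):ℝ)*x)
        - Real.cos (((a-b+c+d:ℤ):ℝ)*x) - Real.cos (((a-b-c-d:ℤ):ℝ)*x))/8 := by
    intro x
    rw [prod4]
    push_cast
    ring_nf
  simp only [key]
  rw [intervalIntegral.integral_div]
  rw [intervalIntegral.integral_sub (((((((cos_int_intervalIntegrable _).add
        (cos_int_intervalIntegrable _)).add (cos_int_intervalIntegrable _)).add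
        (cos_int_intervalIntegrable _)).sub (cos_int_intervalIntegrable _)).sub
        (cos_int_intervalIntegrable _)).sub (cos_int_intervalIntegrable _))
        (cos_int_intervalIntegrable _),
      intervalIntegral.integral_sub ((((((cos_int_intervalIntegrable _).add
        (cos_int_intervalIntegrable _)).add (cos_int_intervalIntegrable _)).add
        (cos_int_intervalIntegrable _)).sub (cos_int_intervalIntegrable _)).sub
        (cos_int_intervalIntegrable _)) (cos_int_intervalIntegrable _),
      intervalIntegral.integral_sub (((((cos_int_intervalIntegrable _).add
        (cos_int_intervalIntegrable _)).add (cos_int_intervalIntegrable _)).add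
        (cos_int_intervalIntegrable _)).sub (cos_int_intervalIntegrable _))
        (cos_int_intervalIntegrable _),
      intervalIntegral.integral_sub ((((cos_int_intervalIntegrable _).add
        (cos_int_intervalIntegrable _)).add (cos_int_intervalIntegrable _)).add
        (cos_int_intervalIntegrable _)) (cos_int_intervalIntegrable _),
      intervalIntegral.integral_add (((cos_int_intervalIntegrable _).add
        (cos_int_intervalIntegrable _)).add (cos_int_intervalIntegrable _))
        (cos_int_intervalIntegrable _),
      intervalIntegral.integral_add ((cos_int_intervalIntegrable _).add
        (cos_int_intervalIntegrable _)) (cos_int_intervalIntegrable _),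
      intervalIntegral.integral_add (cos_int_intervalIntegrable _) (cos_int_intervalIntegrable _)]
  simp only [integral_cos_int, I0]

lemma sin_sum (j : ℕ) (x : ℝ) :
    ∑ p ∈ Finset.range (j+1), Real.sin x * Real.cos (((j:ℝ) - 2*p) * x)
      = Real.sin (((j:ℝ)+1) * x) := by
  have step : ∀ p : ℕ, Real.sin x * Real.cos (((j:ℝ)-2*p)*x)
      = Real.sin (((j:ℝ)-2*p+1)*x)/2 - Real.sin (((j:ℝ)-2*(p+1:ℕ)+1)*x)/2 := by
    intro p
    have h1 : ((j:ℝ)-2*p+1)*x = x + ((j:ℝ)-2*p)*x := by ring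
    have h2 : ((j:ℝ)-2*(p+1:ℕ)+1)*x = -(x - ((j:ℝ)-2*p)*x) := by push_cast; ring
    rw [h1, h2, Real.sin_neg, Real.sin_add, Real.sin_sub]
    ring
  calc ∑ p ∈ Finset.range (j+1), Real.sin x * Real.cos (((j:ℝ) - 2*p) * x)
      = ∑ p ∈ Finset.range (j+1),
          (Real.sin (((j:ℝ)-2*p+1)*x)/2 - Real.sin (((j:ℝ)-2*(p+1:ℕ)+1)*x)/2) :=
        Finset.sum_congr rfl fun p _ => step p
    _ = Real.sin (((j:ℝ)-2*(0:ℕ)+1)*x)/2 - Real.sin (((j:ℝ)-2*((j+1:ℕ):ℕ)+1)*x)/2 :=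
        Finset.sum_range_sub' (fun p => Real.sin (((j:ℝ)-2*p+1)*x)/2) (j+1)
    _ = Real.sin (((j:ℝ)+1) * x) := by
        push_cast
        have : ((j:ℝ)-2*((j:ℝ)+1)+1)*x = -(((j:ℝ)+1)*x) := by ring
        rw [this, Real.sin_neg]
        ring_nf

lemma pointwise (j k l n : ℕ) (x : ℝ) (hx : Real.sin x ≠ 0) :
    Real.sin (((j:ℝ)+1)*x) * Real.sin (((k:ℝ)+1)*x) * Real.sin (((l:ℝ)+1)*x) *
        Real.sin (((n:ℝ)+1)*x) / Real.sin x ^ 2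
    = ∑ p ∈ Finset.range (j+1), ∑ q ∈ Finset.range (k+1),
        Real.cos ((((j:ℤ)-2*p : ℤ):ℝ)*x) * Real.cos ((((k:ℤ)-2*q : ℤ):ℝ)*x) *
        Real.sin ((((l:ℤ)+1 : ℤ):ℝ)*x) * Real.sin ((((n:ℤ)+1 : ℤ):ℝ)*x) := by
  rw [← sin_sum j x, ← sin_sum k x, ← Finset.mul_sum, ← Finset.mul_sum]
  have cancel : ∀ P Q A B : ℝ,
      (Real.sin x * P) * (Real.sin x * Q) * A * B / Real.sin x ^ 2 = P * Q * A * B := by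
    intro P Q A B; field_simp
  rw [cancel, Finset.sum_mul_sum]
  simp only [Finset.sum_mul]
  refine Finset.sum_congr rfl fun p _ => Finset.sum_congr rfl fun q _ => ?_
  push_cast
  ring_nf

lemma count_inner (k l p : ℕ) :
    ∑ q ∈ Finset.range (k+1), (if p + q = l then (1:ℝ) else 0)
      = if p ≤ l ∧ l ≤ p + k then 1 else 0 := by
  by_cases hc : p ≤ l ∧ l ≤ p + k
  · rw [if_pos hc]
    rw [Finset.sum_eq_single_of_mem (l - p) (by simp; omega) (fun q _ hq => by rw [if_neg]; omega)]
    rw [if_pos (by omega)]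
  · rw [if_neg hc]
    exact Finset.sum_eq_zero fun q hq => by rw [if_neg]; simp at hq; omega

lemma count_main (j k l n : ℕ) (h : n + l = j + k) :
    ∑ p ∈ Finset.range (j+1), ∑ q ∈ Finset.range (k+1), (if p + q = l then (1:ℝ) else 0)
      = (min (min j k) (min l n) : ℕ) + 1 := by
  simp only [count_inner]
  have hiff : ∀ p : ℕ, (p ≤ l ∧ l ≤ p + k) ↔ p ∈ Finset.Icc (l - k) l := by
    intro p; simp [Finset.mem_Icc]; omega
  simp only [hiff]
  rw [Finset.sum_boole, Finset.filter_mem_eq_inter,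
      show Finset.range (j+1) ∩ Finset.Icc (l-k) l = Finset.Icc (l-k) (min j l) from by
        ext p; simp; omega]
  rw [Nat.card_Icc]
  have : min j l + 1 - (l - k) = min (min j k) (min l n) + 1 := by
    simp only [Nat.min_def]
    split_ifs <;> omega
  rw [this]
  push_cast
  ring

lemma count2 (j k l n : ℕ) (h : n + l = j + k) :
    ∑ p ∈ Finset.range (j+1), ∑ q ∈ Finset.range (k+1), (if p + q = n then (1:ℝ) else 0)
      = (min (min j k) (min l n) : ℕ) + 1 := by
  rw [count_main j k n l (by omega), min_comm n l]

lemma count3 (j k l n : ℕ) (h : n + l = j + k) :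
    ∑ p ∈ Finset.range (j+1), ∑ q ∈ Finset.range (k+1), (if p + k = q + l then (1:ℝ) else 0)
      = (min (min j k) (min l n) : ℕ) + 1 := by
  have inner : ∀ p, ∑ q ∈ Finset.range (k+1), (if p + k = q + l then (1:ℝ) else 0)
      = ∑ q ∈ Finset.range (k+1), (if p + q = l then (1:ℝ) else 0) := by
    intro p
    rw [← Finset.sum_range_reflect (fun q => if p + k = q + l then (1:ℝ) else 0) (k+1)]
    refine Finset.sum_congr rfl fun q hq => ?_
    simp only [Finset.mem_range] at hq
    exact if_congr (by omega) rfl rfl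
  simp only [inner]
  exact count_main j k l n h

lemma count4 (j k l n : ℕ) (h : n + l = j + k) :
    ∑ p ∈ Finset.range (j+1), ∑ q ∈ Finset.range (k+1), (if p + l = q + j then (1:ℝ) else 0)
      = (min (min j k) (min l n) : ℕ) + 1 := by
  rw [← Finset.sum_range_reflect
      (fun p => ∑ q ∈ Finset.range (k+1), (if p + l = q + j then (1:ℝ) else 0)) (j+1)]
  rw [show (∑ p ∈ Finset.range (j+1), ∑ q ∈ Finset.range (k+1),
      (if (j+1-1-p) + l = q + j then (1:ℝ) else 0))
    = ∑ p ∈ Finset.range (j+1), ∑ q ∈ Finset.range (k+1), (if p + q = l then (1:ℝ) else 0) from ?_]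
  · exact count_main j k l n h
  · refine Finset.sum_congr rfl fun p hp => Finset.sum_congr rfl fun q hq => ?_
    simp only [Finset.mem_range] at hp hq
    exact if_congr (by omega) rfl rfl

lemma term_value (j k l n p q : ℕ) (h : n + l = j + k) (hp : p ≤ j) (hq : q ≤ k) :
    (I0 (((j:ℤ)-2*p) + ((k:ℤ)-2*q) + ((l:ℤ)+1) - ((n:ℤ)+1))
     + I0 (((j:ℤ)-2*p) + ((k:ℤ)-2*q) - ((l:ℤ)+1) + ((n:ℤ)+1))
     + I0 (((j:ℤ)-2*p) - ((k:ℤ)-2*q) + ((l:ℤ)+1) - ((n:ℤ)+1))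
     + I0 (((j:ℤ)-2*p) - ((k:ℤ)-2*q) - ((l:ℤ)+1) + ((n:ℤ)+1))
     - I0 (((j:ℤ)-2*p) + ((k:ℤ)-2*q) + ((l:ℤ)+1) + ((n:ℤ)+1))
     - I0 (((j:ℤ)-2*p) + ((k:ℤ)-2*q) - ((l:ℤ)+1) - ((n:ℤ)+1))
     - I0 (((j:ℤ)-2*p) - ((k:ℤ)-2*q) + ((l:ℤ)+1) + ((n:ℤ)+1))
     - I0 (((j:ℤ)-2*p) - ((k:ℤ)-2*q) - ((l:ℤ)+1) - ((n:ℤ)+1)))/8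
    = Real.pi/8 * ((if p + q = l then (1:ℝ) else 0) + (if p + q = n then (1:ℝ) else 0)
      + (if p + k = q + l then (1:ℝ) else 0) + (if p + l = q + j then (1:ℝ) else 0)) := by
  have h1 : (((j:ℤ)-2*p) + ((k:ℤ)-2*q) + ((l:ℤ)+1) - ((n:ℤ)+1) = 0) ↔ p + q = l := by omega
  have h2 : (((j:ℤ)-2*p) + ((k:ℤ)-2*q) - ((l:ℤ)+1) + ((n:ℤ)+1) = 0) ↔ p + q = n := by omega
  have h3 : (((j:ℤ)-2*p) - ((k:ℤ)-2*q) + ((l:ℤ)+1) - ((n:ℤ)+1) = 0) ↔ p + k = q + l := by omega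
  have h4 : (((j:ℤ)-2*p) - ((k:ℤ)-2*q) - ((l:ℤ)+1) + ((n:ℤ)+1) = 0) ↔ p + l = q + j := by omega
  have h5 : ¬(((j:ℤ)-2*p) + ((k:ℤ)-2*q) + ((l:ℤ)+1) + ((n:ℤ)+1) = 0) := by omega
  have h6 : ¬(((j:ℤ)-2*p) + ((k:ℤ)-2*q) - ((l:ℤ)+1) - ((n:ℤ)+1) = 0) := by omega
  have h7 : ¬(((j:ℤ)-2*p) - ((k:ℤ)-2*q) + ((l:ℤ)+1) + ((n:ℤ)+1) = 0) := by omega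
  have h8 : ¬(((j:ℤ)-2*p) - ((k:ℤ)-2*q) - ((l:ℤ)+1) - ((n:ℤ)+1) = 0) := by omega
  simp only [I0, h1, h2, h3, h4, if_neg h5, if_neg h6, if_neg h7, if_neg h8]
  split_ifs <;> ring

theorem stmt_3 (j k l n : ℕ) (h : n + l = j + k) :
    (2 / Real.pi) * ∫ x in (0:ℝ)..Real.pi,
        Real.sin ((j + 1) * x) * Real.sin ((k + 1) * x) * Real.sin ((l + 1) * x) *
          Real.sin ((n + 1) * x) / (Real.sin x) ^ 2 =
      (min (min j k) (min l n) : ℝ) + 1 := by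
  have hae : (∫ x in (0:ℝ)..Real.pi,
        Real.sin (((j:ℝ) + 1) * x) * Real.sin (((k:ℝ) + 1) * x) * Real.sin (((l:ℝ) + 1) * x) *
          Real.sin (((n:ℝ) + 1) * x) / (Real.sin x) ^ 2)
      = ∫ x in (0:ℝ)..Real.pi, ∑ p ∈ Finset.range (j+1), ∑ q ∈ Finset.range (k+1),
          Real.cos ((((j:ℤ)-2*p : ℤ):ℝ)*x) * Real.cos ((((k:ℤ)-2*q : ℤ):ℝ)*x) *
          Real.sin ((((l:ℤ)+1 : ℤ):ℝ)*x) * Real.sin ((((n:ℤ)+1 : ℤ):ℝ)*x) := by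
    apply intervalIntegral.integral_congr_ae
    have hpi : MeasureTheory.volume ({Real.pi} : Set ℝ) = 0 := Real.volume_singleton
    filter_upwards [MeasureTheory.measure_eq_zero_iff_ae_notMem.mp hpi] with x hxpi hmem
    rw [Set.uIoc_of_le Real.pi_nonneg] at hmem
    have hs : Real.sin x ≠ 0 :=
      ne_of_gt (Real.sin_pos_of_pos_of_lt_pi hmem.1
        (lt_of_le_of_ne hmem.2 (by simpa using hxpi)))
    exact pointwise j k l n x hs
  rw [hae]
  have hcont : ∀ (a b c d : ℤ), Continuous (fun x : ℝ =>
      Real.cos ((a:ℝ)*x) * Real.cos ((b:ℝ)*x) * Real.sin ((c:ℝ)*x) * Real.sin ((d:ℝ)*x)) := by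
    intro a b c d
    fun_prop
  rw [intervalIntegral.integral_finset_sum (fun p _ =>
      (continuous_finset_sum _ (fun q _ => hcont _ _ _ _)).intervalIntegrable _ _)]
  have swap : ∀ p : ℕ, (∫ x in (0:ℝ)..Real.pi, ∑ q ∈ Finset.range (k+1),
        Real.cos ((((j:ℤ)-2*p : ℤ):ℝ)*x) * Real.cos ((((k:ℤ)-2*q : ℤ):ℝ)*x) *
        Real.sin ((((l:ℤ)+1 : ℤ):ℝ)*x) * Real.sin ((((n:ℤ)+1 : ℤ):ℝ)*x))
      = ∑ q ∈ Finset.range (k+1), ∫ x in (0:ℝ)..Real.pi,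
        Real.cos ((((j:ℤ)-2*p : ℤ):ℝ)*x) * Real.cos ((((k:ℤ)-2*q : ℤ):ℝ)*x) *
        Real.sin ((((l:ℤ)+1 : ℤ):ℝ)*x) * Real.sin ((((n:ℤ)+1 : ℤ):ℝ)*x) := fun p =>
    intervalIntegral.integral_finset_sum (fun q _ => (hcont _ _ _ _).intervalIntegrable _ _)
  simp only [swap, term_integral]
  rw [Finset.sum_congr rfl (fun p hp => Finset.sum_congr rfl (fun q hq =>
      term_value j k l n p q h
        (Nat.lt_succ_iff.mp (Finset.mem_range.mp hp))
        (Nat.lt_succ_iff.mp (Finset.mem_range.mp hq))))]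
  simp only [← Finset.mul_sum, Finset.sum_add_distrib]
  rw [count_main j k l n h, count2 j k l n h, count3 j k l n h, count4 j k l n h]
  have hpi := Real.pi_ne_zero
  field_simp
  push_cast
  rw [← min_assoc]
  ring
end

section
/- For natural numbers j, k, l, n with n = j + k + l + 2, the integral (2/π) ∫₀^π (sin((j+1)x) sin((k+1)x) sin((l+1)x) sin((n+1)x)) / sin²x dx equals 0. -/
lemma cosI (m : ℤ) : ∫ x in (0:ℝ)..Real.pi, Real.cos (m * x) = if m = 0 then Real.pi else 0 := by
  rcases eq_or_ne m 0 with hm | hm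
  · simp [hm]
  · rw [if_neg hm]
    have hc : (m:ℝ) ≠ 0 := Int.cast_ne_zero.mpr hm
    have := intervalIntegral.integral_comp_mul_left (a := (0:ℝ)) (b := Real.pi) (fun x => Real.cos x) hc
    simp only [integral_cos, mul_zero, Real.sin_zero] at this
    rw [this, Real.sin_int_mul_pi]
    simp

lemma sinsinI (a b : ℤ) : ∫ x in (0:ℝ)..Real.pi, Real.sin (a * x) * Real.sin (b * x)
    = (if a = b then Real.pi / 2 else 0) - (if a = -b then Real.pi / 2 else 0) := by
  have hpt : ∀ x : ℝ, Real.sin (a*x) * Real.sin (b*x)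
      = Real.cos (((a-b : ℤ)) * x) / 2 - Real.cos (((a+b : ℤ)) * x) / 2 := by
    intro x
    have h1 := Real.cos_sub (a*x) (b*x)
    have h2 := Real.cos_add (a*x) (b*x)
    push_cast
    rw [sub_mul, add_mul]
    linarith
  simp only [hpt]
  rw [intervalIntegral.integral_sub, intervalIntegral.integral_div, intervalIntegral.integral_div,
    cosI, cosI]
  · simp only [sub_eq_zero, add_eq_zero_iff_eq_neg]
    split_ifs <;> ring
  · exact ((Real.continuous_cos.comp (continuous_const.mul continuous_id)).div_const 2).intervalIntegrable _ _
  · exact ((Real.continuous_cos.comp (continuous_const.mul continuous_id)).div_const 2).intervalIntegrable _ _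

lemma helper (p q x : ℝ) : Real.sin x * Real.sin (p + q - x)
    = Real.sin p * Real.sin q - Real.sin (p - x) * Real.sin (q - x) := by
  rw [Real.sin_sub p, Real.sin_sub q, Real.sin_sub (p+q), Real.sin_add p q, Real.cos_add p q]
  linear_combination Real.sin p * Real.sin q * Real.sin_sq_add_cos_sq x

lemma star (j : ℕ) : ∀ (A : ℤ) (x : ℝ),
    Real.sin ((A:ℝ) * x) * Real.sin (((j:ℝ) + 1) * x)
      = Real.sin x * ∑ t ∈ Finset.range (j+1), Real.sin (((A + (j:ℤ) - 2*(t:ℤ)) : ℝ) * x) := by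
  induction j with
  | zero => intro A x; simp [mul_comm]
  | succ j ih =>
    intro A x
    rw [Finset.sum_range_succ']
    have e0 : ((A + ((j+1:ℕ):ℤ) - 2*((0:ℕ):ℤ)) : ℝ) * x = (A:ℝ)*x + ((j:ℝ)+2)*x - x := by
      push_cast; ring
    have etail : ∀ t ∈ Finset.range (j+1),
        Real.sin (((A + ((j+1:ℕ):ℤ) - 2*((t+1:ℕ):ℤ)) : ℝ) * x)
          = Real.sin ((((A - 1 : ℤ) : ℝ) + ((j:ℤ):ℝ) - 2*((t:ℤ):ℝ)) * x) := by
      intro t _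
      congr 1
      push_cast; ring
    rw [Finset.sum_congr rfl etail, mul_add, ← ih (A-1) x, e0, helper]
    have e1 : (A:ℝ)*x - x = ((A-1 : ℤ):ℝ)*x := by push_cast; ring
    have e2 : ((j:ℝ)+2)*x - x = ((j:ℝ)+1)*x := by ring
    have e3 : (((j+1:ℕ):ℝ)+1)*x = ((j:ℝ)+2)*x := by push_cast; ring
    rw [e1, e2, e3]
    ring

lemma sumval (j k l n : ℕ) (h : n = j + k + l + 2) :
    ∑ t ∈ Finset.range (j+1), ∑ s ∈ Finset.range (n+1),
      ((if ((k:ℤ)+1+j-2*t) = ((l:ℤ)+1+n-2*s) then Real.pi/2 else 0)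
        - (if ((k:ℤ)+1+j-2*t) = -((l:ℤ)+1+n-2*s) then Real.pi/2 else 0)) = 0 := by
  apply Finset.sum_eq_zero
  intro t ht
  rw [Finset.mem_range] at ht
  rw [Finset.sum_sub_distrib]
  have hiff1 : ∀ s : ℕ, (((k:ℤ)+1+j-2*t) = ((l:ℤ)+1+n-2*s)) ↔ s = t+l+1 := by
    intro s; omega
  have hiff2 : ∀ s : ℕ, (((k:ℤ)+1+j-2*t) = -((l:ℤ)+1+n-2*s)) ↔ s = n-t := by
    intro s; omega
  have e1 : ∑ s ∈ Finset.range (n+1),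
      (if ((k:ℤ)+1+j-2*t) = ((l:ℤ)+1+n-2*s) then Real.pi/2 else 0) = Real.pi/2 := by
    simp only [hiff1]
    rw [Finset.sum_ite_eq' (Finset.range (n+1)) (t+l+1) (fun _ => Real.pi/2),
      if_pos (by rw [Finset.mem_range]; omega)]
  have e2 : ∑ s ∈ Finset.range (n+1),
      (if ((k:ℤ)+1+j-2*t) = -((l:ℤ)+1+n-2*s) then Real.pi/2 else 0) = Real.pi/2 := by
    simp only [hiff2]
    rw [Finset.sum_ite_eq' (Finset.range (n+1)) (n-t) (fun _ => Real.pi/2),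
      if_pos (by rw [Finset.mem_range]; omega)]
  rw [e1, e2, sub_self]

theorem stmt_4 (j k l n : ℕ) (h : n = j + k + l + 2) :
    (2 / Real.pi) * ∫ x in (0:ℝ)..Real.pi,
        Real.sin ((j + 1) * x) * Real.sin ((k + 1) * x) * Real.sin ((l + 1) * x) *
          Real.sin ((n + 1) * x) / (Real.sin x) ^ 2 = 0 := by
  have hcongr : ∫ x in (0:ℝ)..Real.pi,
        Real.sin ((j + 1) * x) * Real.sin ((k + 1) * x) * Real.sin ((l + 1) * x) *
          Real.sin ((n + 1) * x) / (Real.sin x) ^ 2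
      = ∫ x in (0:ℝ)..Real.pi, ∑ t ∈ Finset.range (j+1), ∑ s ∈ Finset.range (n+1),
          Real.sin ((((k:ℤ)+1+j-2*t : ℤ) : ℝ) * x) * Real.sin ((((l:ℤ)+1+n-2*s : ℤ) : ℝ) * x) := by
    apply intervalIntegral.integral_congr_ae
    have hae : ∀ᵐ x : ℝ, x ≠ Real.pi := by
      refine MeasureTheory.ae_iff.mpr ?_
      simp only [not_not, Set.setOf_eq_eq_singleton]
      exact Real.volume_singleton
    filter_upwards [hae] with x hxpi hxmem
    rw [Set.uIoc_of_le Real.pi_pos.le] at hxmem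
    have hsin : Real.sin x ≠ 0 :=
      ne_of_gt (Real.sin_pos_of_pos_of_lt_pi hxmem.1 (lt_of_le_of_ne hxmem.2 hxpi))
    rw [div_eq_iff (pow_ne_zero 2 hsin)]
    have h1' : Real.sin (((k:ℝ)+1)*x) * Real.sin (((j:ℝ)+1)*x)
        = Real.sin x * ∑ t ∈ Finset.range (j+1),
            Real.sin ((((k:ℤ)+1+j-2*t : ℤ):ℝ)*x) := by
      have h1 := star j ((k:ℤ)+1) x
      push_cast at h1 ⊢
      exact h1
    have h2' : Real.sin (((l:ℝ)+1)*x) * Real.sin (((n:ℝ)+1)*x)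
        = Real.sin x * ∑ s ∈ Finset.range (n+1),
            Real.sin ((((l:ℤ)+1+n-2*s : ℤ):ℝ)*x) := by
      have h2 := star n ((l:ℤ)+1) x
      push_cast at h2 ⊢
      exact h2
    calc Real.sin ((j + 1) * x) * Real.sin ((k + 1) * x) * Real.sin ((l + 1) * x) *
          Real.sin ((n + 1) * x)
        = (Real.sin x * ∑ t ∈ Finset.range (j+1),
              Real.sin ((((k:ℤ)+1+j-2*t : ℤ):ℝ)*x))
            * (Real.sin x * ∑ s ∈ Finset.range (n+1),
              Real.sin ((((l:ℤ)+1+n-2*s : ℤ):ℝ)*x)) := by rw [← h1', ← h2']; ring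
      _ = ((∑ t ∈ Finset.range (j+1), Real.sin ((((k:ℤ)+1+j-2*t : ℤ):ℝ)*x))
            * (∑ s ∈ Finset.range (n+1), Real.sin ((((l:ℤ)+1+n-2*s : ℤ):ℝ)*x)))
            * Real.sin x ^ 2 := by ring
      _ = (∑ t ∈ Finset.range (j+1), ∑ s ∈ Finset.range (n+1),
            Real.sin ((((k:ℤ)+1+j-2*t : ℤ) : ℝ) * x)
              * Real.sin ((((l:ℤ)+1+n-2*s : ℤ) : ℝ) * x)) * Real.sin x ^ 2 := by
          rw [Finset.sum_mul_sum]
  have contss : ∀ (a b : ℤ),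
      Continuous (fun x : ℝ => Real.sin ((a:ℝ)*x) * Real.sin ((b:ℝ)*x)) := fun a b =>
    (Real.continuous_sin.comp (continuous_const.mul continuous_id)).mul
      (Real.continuous_sin.comp (continuous_const.mul continuous_id))
  rw [hcongr,
    intervalIntegral.integral_finset_sum (fun t _ =>
      (continuous_finset_sum _ (fun s _ => contss _ _)).intervalIntegrable _ _)]
  have step2 : ∀ t : ℕ, (∫ x in (0:ℝ)..Real.pi, ∑ s ∈ Finset.range (n+1),
        Real.sin ((((k:ℤ)+1+j-2*t : ℤ) : ℝ) * x) * Real.sin ((((l:ℤ)+1+n-2*s : ℤ) : ℝ) * x))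
      = ∑ s ∈ Finset.range (n+1),
        ((if ((k:ℤ)+1+j-2*t) = ((l:ℤ)+1+n-2*s) then Real.pi/2 else 0)
          - (if ((k:ℤ)+1+j-2*t) = -((l:ℤ)+1+n-2*s) then Real.pi/2 else 0)) := by
    intro t
    rw [intervalIntegral.integral_finset_sum (fun s _ => (contss _ _).intervalIntegrable _ _)]
    exact Finset.sum_congr rfl (fun s _ => sinsinI _ _)
  simp only [step2]
  rw [sumval j k l n h, mul_zero]
end

section
/- Along any solution of the conformal flow i(n+1) α̇ₙ = ∑_{j=0}^∞ ∑_{k=0}^{n+j} (min(n,j,k,n+j-k)+1) conj(α_j) α_k α_{n+j-k} supported on finitely many modes, the quantity Q = ∑ₙ (n+1)|αₙ|² is conserved. -/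
open Finset Complex

private def Gf (β : ℕ → ℂ) (n j k m : ℕ) : ℂ :=
  ((min (min n j) (min k m) + 1 : ℕ) : ℂ) * star (β n) * star (β j) * β k * β m

private def Ff (β : ℕ → ℂ) (p q : ℕ × ℕ) : ℂ :=
  if p.1 + p.2 = q.1 + q.2 then Gf β p.1 p.2 q.1 q.2 else 0

private lemma Gf_zero_left {β : ℕ → ℂ} {n j k m : ℕ} (h : β n = 0) : Gf β n j k m = 0 := by
  simp [Gf, h]

private lemma Gf_zero_j {β : ℕ → ℂ} {n j k m : ℕ} (h : β j = 0) : Gf β n j k m = 0 := by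
  simp [Gf, h]

private lemma Gf_zero_k {β : ℕ → ℂ} {n j k m : ℕ} (h : β k = 0) : Gf β n j k m = 0 := by
  simp [Gf, h]

private lemma Gf_zero_m {β : ℕ → ℂ} {n j k m : ℕ} (h : β m = 0) : Gf β n j k m = 0 := by
  simp [Gf, h]

private lemma Ff_star (β : ℕ → ℂ) (p q : ℕ × ℕ) : star (Ff β p q) = Ff β q p := by
  unfold Ff Gf
  by_cases h : p.1 + p.2 = q.1 + q.2
  · rw [if_pos h, if_pos h.symm, min_comm (min q.1 q.2)]
    simp only [star_mul', star_star, star_natCast]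
    ring
  · rw [if_neg h, if_neg (fun hh => h hh.symm), star_zero]

private lemma key (β : ℕ → ℂ) (N : ℕ) (hβ : ∀ n, N ≤ n → β n = 0) :
    star (∑ n ∈ range N, star (β n) *
        ∑ j ∈ range N, ∑ k ∈ range (n + j + 1),
          ((min (min n j) (min k (n + j - k)) + 1 : ℕ) : ℂ) * star (β j) * β k * β (n + j - k))
      = ∑ n ∈ range N, star (β n) *
        ∑ j ∈ range N, ∑ k ∈ range (n + j + 1),
          ((min (min n j) (min k (n + j - k)) + 1 : ℕ) : ℂ) * star (β j) * β k * β (n + j - k) := by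
  set M := 2 * N with hM
  have hNM : N ≤ M := by omega
  -- inner collapse
  have step1 : ∀ n j : ℕ,
      (∑ q ∈ range M ×ˢ range M, Ff β (n, j) q)
        = ∑ k ∈ range (n + j + 1), Gf β n j k (n + j - k) := by
    intro n j
    rw [Finset.sum_product]
    have hcol : ∀ k ∈ range M, (∑ m ∈ range M, Ff β (n, j) (k, m))
        = if k ≤ n + j then Gf β n j k (n + j - k) else 0 := by
      intro k _
      by_cases hk' : k ≤ n + j
      · rw [if_pos hk']
        have h1 : ∀ m ∈ range M, Ff β (n, j) (k, m)
            = if m = n + j - k then Gf β n j k m else 0 := by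
          intro m _
          exact if_congr (by omega) rfl rfl
        rw [Finset.sum_congr rfl h1, Finset.sum_ite_eq' (range M) (n + j - k)]
        by_cases hm : n + j - k ∈ range M
        · rw [if_pos hm]
        · rw [if_neg hm]
          exact (Gf_zero_m (hβ _ (by simp only [mem_range] at hm; omega))).symm
      · rw [if_neg hk']
        exact Finset.sum_eq_zero fun m _ => if_neg (by omega)
    rw [Finset.sum_congr rfl hcol]
    -- compare with range (n+j+1)
    have e1 : (∑ k ∈ range M, if k ≤ n + j then Gf β n j k (n + j - k) else 0)
        = ∑ k ∈ range (M + n + j + 1), if k ≤ n + j then Gf β n j k (n + j - k) else 0 := by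
      apply Finset.sum_subset (Finset.range_subset_range.2 (by omega))
      intro k hk hk'
      simp only [mem_range] at hk hk'
      split_ifs with h
      · exact Gf_zero_k (hβ _ (by omega))
      · rfl
    have e2 : (∑ k ∈ range (n + j + 1), Gf β n j k (n + j - k))
        = ∑ k ∈ range (M + n + j + 1), if k ≤ n + j then Gf β n j k (n + j - k) else 0 := by
      rw [show (∑ k ∈ range (n + j + 1), Gf β n j k (n + j - k))
          = ∑ k ∈ range (n + j + 1), if k ≤ n + j then Gf β n j k (n + j - k) else 0 from
        Finset.sum_congr rfl fun k hk => (if_pos (by simp only [mem_range] at hk; omega)).symm]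
      apply Finset.sum_subset (Finset.range_subset_range.2 (by omega))
      intro k hk hk'
      simp only [mem_range] at hk hk'
      exact if_neg (by omega)
    rw [e1, ← e2]
  -- identify E with the symmetric sum
  have hE : (∑ n ∈ range N, star (β n) *
        ∑ j ∈ range N, ∑ k ∈ range (n + j + 1),
          ((min (min n j) (min k (n + j - k)) + 1 : ℕ) : ℂ) * star (β j) * β k * β (n + j - k))
      = ∑ p ∈ range M ×ˢ range M, ∑ q ∈ range M ×ˢ range M, Ff β p q := by
    rw [Finset.sum_product]
    have outer : ∀ n ∈ range M, (∑ j ∈ range M, ∑ q ∈ range M ×ˢ range M, Ff β (n, j) q)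
        = ∑ j ∈ range M, ∑ k ∈ range (n + j + 1), Gf β n j k (n + j - k) :=
      fun n _ => Finset.sum_congr rfl fun j _ => step1 n j
    rw [Finset.sum_congr rfl outer]
    -- shrink n range
    rw [show (∑ n ∈ range M, ∑ j ∈ range M, ∑ k ∈ range (n + j + 1), Gf β n j k (n + j - k))
        = ∑ n ∈ range N, ∑ j ∈ range M, ∑ k ∈ range (n + j + 1), Gf β n j k (n + j - k) from
      (Finset.sum_subset (Finset.range_subset_range.2 hNM) (fun n hn hn' =>
        Finset.sum_eq_zero fun j _ => Finset.sum_eq_zero fun k _ =>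
          Gf_zero_left (hβ _ (by simp only [mem_range] at hn'; omega)))).symm]
    apply Finset.sum_congr rfl
    intro n hn
    rw [show (∑ j ∈ range M, ∑ k ∈ range (n + j + 1), Gf β n j k (n + j - k))
        = ∑ j ∈ range N, ∑ k ∈ range (n + j + 1), Gf β n j k (n + j - k) from
      (Finset.sum_subset (Finset.range_subset_range.2 hNM) (fun j _ hj' =>
        Finset.sum_eq_zero fun k _ =>
          Gf_zero_j (hβ _ (by simp only [mem_range] at hj'; omega)))).symm]
    rw [Finset.mul_sum]
    refine Finset.sum_congr rfl fun j _ => ?_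
    rw [Finset.mul_sum]
    refine Finset.sum_congr rfl fun k _ => ?_
    unfold Gf
    ring
  rw [hE, star_sum]
  simp only [star_sum, Ff_star]
  exact Finset.sum_comm

private lemma hasDerivAt_re {f : ℝ → ℂ} {f' : ℂ} {x : ℝ} (h : HasDerivAt f f' x) :
    HasDerivAt (fun t => (f t).re) f'.re x := by
  exact (Complex.reCLM.hasFDerivAt.comp_hasDerivAt x h)

private noncomputable def Sn (β : ℕ → ℂ) (N n : ℕ) : ℂ :=
  ∑ j ∈ range N, ∑ k ∈ range (n + j + 1),
    ((min (min n j) (min k (n + j - k)) + 1 : ℕ) : ℂ) * star (β j) * β k * β (n + j - k)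

theorem stmt_5 (α : ℕ → ℝ → ℂ) (N : ℕ)
    (hsupp : ∀ n, N ≤ n → ∀ t : ℝ, α n t = 0)
    (hdiff : ∀ n, Differentiable ℝ (α n))
    (hflow : ∀ (n : ℕ) (t : ℝ),
      Complex.I * ((n : ℂ) + 1) * deriv (α n) t =
        ∑' j : ℕ, ∑ k ∈ Finset.range (n + j + 1),
          ((min (min n j) (min k (n + j - k)) + 1 : ℕ) : ℂ) *
            (starRingEnd ℂ) (α j t) * α k t * α (n + j - k) t) :
    ∀ t s : ℝ,
      (∑' n : ℕ, ((n : ℝ) + 1) * ‖α n t‖ ^ 2) =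
      (∑' n : ℕ, ((n : ℝ) + 1) * ‖α n s‖ ^ 2) := by
  intro t s
  have hterm : ∀ (n : ℕ) (z : ℂ),
      (((n : ℂ) + 1) * (star z * z)).re = ((n : ℝ) + 1) * ‖z‖ ^ 2 := by
    intro n z
    rw [show star z = (starRingEnd ℂ) z from rfl, Complex.conj_mul',
      show ((‖z‖ : ℂ)) ^ 2 = ((‖z‖ ^ 2 : ℝ) : ℂ) by push_cast; ring,
      show ((n : ℂ) + 1) = (((n : ℝ) + 1 : ℝ) : ℂ) by push_cast; ring,
      ← Complex.ofReal_mul, Complex.ofReal_re]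
  have hQ : ∀ u : ℝ, (∑' n : ℕ, ((n : ℝ) + 1) * ‖α n u‖ ^ 2)
      = (∑ n ∈ range N, ((n : ℂ) + 1) * (star (α n u) * α n u)).re := by
    intro u
    rw [tsum_eq_sum (s := range N) (fun n hn => by
      rw [hsupp n (by simp only [mem_range] at hn; omega) u]; simp),
      Complex.re_sum]
    exact Finset.sum_congr rfl fun n _ => (hterm n _).symm
  rw [hQ t, hQ s]
  have hderiv : ∀ u : ℝ,
      HasDerivAt (fun v => (∑ n ∈ range N, ((n : ℂ) + 1) * (star (α n v) * α n v)).re) 0 u := by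
    intro u
    have hflow' : ∀ n : ℕ,
        Complex.I * ((n : ℂ) + 1) * deriv (α n) u = Sn (fun m => α m u) N n := by
      intro n
      rw [hflow n u, tsum_eq_sum (s := range N) (fun j hj => Finset.sum_eq_zero fun k _ => by
        rw [hsupp j (by simp only [mem_range] at hj; omega) u]; simp)]
      rfl
    have h1 : ∀ n : ℕ,
        ((n : ℂ) + 1) * deriv (α n) u = -Complex.I * Sn (fun m => α m u) N n := by
      intro n
      linear_combination (-Complex.I) * hflow' n
        + ((n : ℂ) + 1) * deriv (α n) u * Complex.I_mul_I
    have h2 : ∀ n : ℕ,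
        ((n : ℂ) + 1) * star (deriv (α n) u) = Complex.I * star (Sn (fun m => α m u) N n) := by
      intro n
      rw [show ((n : ℂ) + 1) * star (deriv (α n) u)
          = star (((n : ℂ) + 1) * deriv (α n) u) by simp [star_mul'], h1 n]
      simp [star_mul', Complex.star_def, Complex.conj_I]
    have hF' : HasDerivAt (fun v => ∑ n ∈ range N, ((n : ℂ) + 1) * (star (α n v) * α n v))
        (∑ n ∈ range N, ((n : ℂ) + 1) *
          (star (deriv (α n) u) * α n u + star (α n u) * deriv (α n) u)) u :=
      HasDerivAt.fun_sum fun n _ =>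
        (((hdiff n u).hasDerivAt.star.mul (hdiff n u).hasDerivAt)).const_mul _
    have hT : star (∑ n ∈ range N, star (α n u) * Sn (fun m => α m u) N n)
        = ∑ n ∈ range N, star (α n u) * Sn (fun m => α m u) N n :=
      key (fun m => α m u) N (fun n hn => hsupp n hn u)
    have hD : (∑ n ∈ range N, ((n : ℂ) + 1) *
          (star (deriv (α n) u) * α n u + star (α n u) * deriv (α n) u)) = 0 := by
      have e : ∀ n ∈ range N, ((n : ℂ) + 1) *
            (star (deriv (α n) u) * α n u + star (α n u) * deriv (α n) u)
          = Complex.I * (star (star (α n u) * Sn (fun m => α m u) N n)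
              - star (α n u) * Sn (fun m => α m u) N n) := by
        intro n _
        simp only [star_mul', star_star]
        linear_combination (α n u) * h2 n + star (α n u) * h1 n
      rw [Finset.sum_congr rfl e, ← Finset.mul_sum, Finset.sum_sub_distrib, ← star_sum, hT]
      simp
    rw [hD] at hF'
    exact hasDerivAt_re hF'
  exact is_const_of_deriv_eq_zero (fun u => (hderiv u).differentiableAt)
    (fun u => (hderiv u).deriv) t s
end

section
/- Along any solution of the conformal flow i(n+1) α̇ₙ = ∑_{j=0}^∞ ∑_{k=0}^{n+j} (min(n,j,k,n+j-k)+1) conj(α_j) α_k α_{n+j-k} supported on finitely many modes, the quantity E = ∑ₙ (n+1)²|αₙ|² is conserved. -/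
open Finset Complex

private def Gt (a : ℕ → ℂ) (x : (ℕ × ℕ) × ℕ × ℕ) : ℂ :=
  ((min (min x.1.1 x.1.2) (min x.2.1 x.2.2) + 1 : ℕ) : ℂ) *
    (starRingEnd ℂ) (a x.1.1) * (starRingEnd ℂ) (a x.1.2) * a x.2.1 * a x.2.2

private lemma Gt_swap1 (a : ℕ → ℂ) (p1 p2 : ℕ) (q : ℕ × ℕ) :
    Gt a ((p2, p1), q) = Gt a ((p1, p2), q) := by
  unfold Gt; rw [min_comm p2 p1]; ring

private lemma Gt_swap2 (a : ℕ → ℂ) (p : ℕ × ℕ) (q1 q2 : ℕ) :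
    Gt a (p, (q2, q1)) = Gt a (p, (q1, q2)) := by
  unfold Gt; rw [min_comm q2 q1]; ring

private lemma Gt_star (a : ℕ → ℂ) (x : (ℕ × ℕ) × ℕ × ℕ) :
    (starRingEnd ℂ) (Gt a x) = Gt a (x.2, x.1) := by
  unfold Gt
  simp only [map_mul, map_natCast, Complex.conj_conj]
  rw [min_comm (min x.2.1 x.2.2) (min x.1.1 x.1.2)]
  ring

private lemma symm_core (a : ℕ → ℂ) (N : ℕ) (ha : ∀ n, N ≤ n → a n = 0) :
    (∑ n ∈ Finset.range N, ((n : ℂ) + 1) * (starRingEnd ℂ) (a n) *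
      ∑ j ∈ Finset.range N, ∑ k ∈ Finset.range (n + j + 1),
        ((min (min n j) (min k (n + j - k)) + 1 : ℕ) : ℂ) *
          (starRingEnd ℂ) (a j) * a k * a (n + j - k)).im = 0 := by
  set P : Finset (ℕ × ℕ) := Finset.range N ×ˢ Finset.range N with hP
  set R : Finset ((ℕ × ℕ) × ℕ × ℕ) :=
    (P ×ˢ P).filter (fun x => x.1.1 + x.1.2 = x.2.1 + x.2.2) with hRdef
  have hmemR : ∀ x : (ℕ × ℕ) × ℕ × ℕ, x ∈ R ↔
      (x.1.1 < N ∧ x.1.2 < N ∧ x.2.1 < N ∧ x.2.2 < N ∧ x.1.1 + x.1.2 = x.2.1 + x.2.2) := by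
    intro x
    simp only [hRdef, hP, Finset.mem_filter, Finset.mem_product, Finset.mem_range]
    tauto
  -- terms of Gt vanish when any index is ≥ N
  have hGzero : ∀ x : (ℕ × ℕ) × ℕ × ℕ,
      (N ≤ x.1.1 ∨ N ≤ x.1.2 ∨ N ≤ x.2.1 ∨ N ≤ x.2.2) → Gt a x = 0 := by
    intro x hx
    unfold Gt
    rcases hx with h | h | h | h <;> simp [ha _ h]
  -- Step 1: the sum equals a sum over R
  have hT : (∑ n ∈ Finset.range N, ((n : ℂ) + 1) * (starRingEnd ℂ) (a n) *
      ∑ j ∈ Finset.range N, ∑ k ∈ Finset.range (n + j + 1),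
        ((min (min n j) (min k (n + j - k)) + 1 : ℕ) : ℂ) *
          (starRingEnd ℂ) (a j) * a k * a (n + j - k))
      = ∑ x ∈ R, ((x.1.1 : ℂ) + 1) * Gt a x := by
    have step1 : ∀ n j : ℕ,
        ((n : ℂ) + 1) * (starRingEnd ℂ) (a n) *
          ∑ k ∈ Finset.range (n + j + 1),
            ((min (min n j) (min k (n + j - k)) + 1 : ℕ) : ℂ) *
              (starRingEnd ℂ) (a j) * a k * a (n + j - k)
        = ∑ q ∈ Finset.HasAntidiagonal.antidiagonal (n + j), ((n : ℂ) + 1) * Gt a ((n, j), q) := by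
      intro n j
      rw [Finset.Nat.sum_antidiagonal_eq_sum_range_succ_mk
        (fun q => ((n : ℂ) + 1) * Gt a ((n, j), q)) (n + j), Finset.mul_sum]
      refine Finset.sum_congr rfl fun k _ => ?_
      unfold Gt; ring
    calc (∑ n ∈ Finset.range N, ((n : ℂ) + 1) * (starRingEnd ℂ) (a n) *
          ∑ j ∈ Finset.range N, ∑ k ∈ Finset.range (n + j + 1),
            ((min (min n j) (min k (n + j - k)) + 1 : ℕ) : ℂ) *
              (starRingEnd ℂ) (a j) * a k * a (n + j - k))
        = ∑ n ∈ Finset.range N, ∑ j ∈ Finset.range N,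
            ∑ q ∈ Finset.HasAntidiagonal.antidiagonal (n + j), ((n : ℂ) + 1) * Gt a ((n, j), q) := by
          refine Finset.sum_congr rfl fun n _ => ?_
          rw [Finset.mul_sum]
          exact Finset.sum_congr rfl fun j _ => step1 n j
      _ = ∑ p ∈ P, ∑ q ∈ Finset.HasAntidiagonal.antidiagonal (p.1 + p.2), ((p.1 : ℂ) + 1) * Gt a (p, q) := by
          rw [hP]
          exact (Finset.sum_product (s := Finset.range N) (t := Finset.range N)
            (f := fun p => ∑ q ∈ Finset.HasAntidiagonal.antidiagonal (p.1 + p.2),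
              ((p.1 : ℂ) + 1) * Gt a (p, q))).symm
      _ = ∑ p ∈ P, ∑ q ∈ P.filter (fun q => p.1 + p.2 = q.1 + q.2),
            ((p.1 : ℂ) + 1) * Gt a (p, q) := by
          refine Finset.sum_congr rfl fun p hp => ?_
          have hsets : P.filter (fun q => p.1 + p.2 = q.1 + q.2)
              = (Finset.HasAntidiagonal.antidiagonal (p.1 + p.2)).filter (fun q => q.1 < N ∧ q.2 < N) := by
            ext q
            simp only [hP, Finset.mem_filter, Finset.mem_product, Finset.mem_range,
              Finset.HasAntidiagonal.mem_antidiagonal]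
            omega
          rw [hsets]
          refine (Finset.sum_subset (Finset.filter_subset _ _) ?_).symm
          intro q hq hq'
          simp only [Finset.mem_filter, Finset.HasAntidiagonal.mem_antidiagonal, not_and] at hq hq'
          have : N ≤ q.1 ∨ N ≤ q.2 := by
            by_contra h
            push_neg at h
            exact absurd (h.2) (by simpa using hq' hq h.1)
          rw [hGzero ((p, q)) (by tauto)]
          ring
      _ = ∑ x ∈ R, ((x.1.1 : ℂ) + 1) * Gt a x := by
          rw [hRdef, Finset.sum_filter]
          rw [Finset.sum_product (s := P) (t := P)
            (f := fun x : (ℕ × ℕ) × ℕ × ℕ =>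
              if x.1.1 + x.1.2 = x.2.1 + x.2.2 then ((x.1.1 : ℂ) + 1) * Gt a x else 0)]
          refine Finset.sum_congr rfl fun p _ => ?_
          exact Finset.sum_filter _ _
  rw [hT]
  -- Now prove the sum over R has zero imaginary part, i.e. it is conj-invariant.
  rw [← Complex.conj_eq_iff_im]
  rw [map_sum]
  -- S1 = S2
  have hS12 : ∑ x ∈ R, ((x.1.1 : ℂ) + 1) * Gt a x
      = ∑ x ∈ R, ((x.1.2 : ℂ) + 1) * Gt a x := by
    refine Finset.sum_nbij' (fun x => ((x.1.2, x.1.1), x.2)) (fun x => ((x.1.2, x.1.1), x.2))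
      ?_ ?_ ?_ ?_ ?_
    · intro x hx; rw [hmemR] at hx ⊢; dsimp only at hx ⊢; omega
    · intro x hx; rw [hmemR] at hx ⊢; dsimp only at hx ⊢; omega
    · intro x _; rfl
    · intro x _; rfl
    · intro x _
      simp only
      rw [Gt_swap1]
  -- S3 = S4
  have hS34 : ∑ x ∈ R, ((x.2.1 : ℂ) + 1) * Gt a x
      = ∑ x ∈ R, ((x.2.2 : ℂ) + 1) * Gt a x := by
    refine Finset.sum_nbij' (fun x => (x.1, (x.2.2, x.2.1))) (fun x => (x.1, (x.2.2, x.2.1)))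
      ?_ ?_ ?_ ?_ ?_
    · intro x hx; rw [hmemR] at hx ⊢; dsimp only at hx ⊢; omega
    · intro x hx; rw [hmemR] at hx ⊢; dsimp only at hx ⊢; omega
    · intro x _; rfl
    · intro x _; rfl
    · intro x _
      simp only
      rw [Gt_swap2]
  -- conj of S1 equals S3
  have hstar : ∑ x ∈ R, (starRingEnd ℂ) (((x.1.1 : ℂ) + 1) * Gt a x)
      = ∑ x ∈ R, ((x.2.1 : ℂ) + 1) * Gt a x := by
    refine Finset.sum_nbij' (fun x => (x.2, x.1)) (fun x => (x.2, x.1)) ?_ ?_ ?_ ?_ ?_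
    · intro x hx; rw [hmemR] at hx ⊢; dsimp only at hx ⊢; omega
    · intro x hx; rw [hmemR] at hx ⊢; dsimp only at hx ⊢; omega
    · intro x _; rfl
    · intro x _; rfl
    · intro x _
      simp only [map_mul, map_add, map_natCast, map_one]
      rw [Gt_star]
  rw [hstar]
  -- 2*S3 = S3+S4 = S1+S2 = 2*S1 using filter condition
  have hsum : ∑ x ∈ R, ((x.1.1 : ℂ) + 1) * Gt a x + ∑ x ∈ R, ((x.1.2 : ℂ) + 1) * Gt a x
      = ∑ x ∈ R, ((x.2.1 : ℂ) + 1) * Gt a x + ∑ x ∈ R, ((x.2.2 : ℂ) + 1) * Gt a x := by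
    rw [← Finset.sum_add_distrib, ← Finset.sum_add_distrib]
    refine Finset.sum_congr rfl fun x hx => ?_
    rw [hmemR] at hx
    have h5 := hx.2.2.2.2
    have hc : ((x.1.1 : ℂ) + x.1.2) = ((x.2.1 : ℂ) + x.2.2) := by
      exact_mod_cast congrArg (fun m : ℕ => (m : ℂ)) h5
    linear_combination Gt a x * hc
  have h2 : (2 : ℂ) * (∑ x ∈ R, ((x.2.1 : ℂ) + 1) * Gt a x)
      = (2 : ℂ) * (∑ x ∈ R, ((x.1.1 : ℂ) + 1) * Gt a x) := by
    rw [two_mul, two_mul]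
    nth_rewrite 2 [hS34]
    nth_rewrite 2 [hS12]
    exact hsum.symm
  have := mul_left_cancel₀ (two_ne_zero (α := ℂ)) h2
  exact this

private lemma hasDerivAt_normSq_comp {f : ℝ → ℂ} {f' : ℂ} {t : ℝ} (hf : HasDerivAt f f' t) :
    HasDerivAt (fun u => Complex.normSq (f u))
      ((f' * (starRingEnd ℂ) (f t) + f t * (starRingEnd ℂ) f').re) t := by
  have h1 : HasDerivAt (fun u => f u * (starRingEnd ℂ) (f u))
      (f' * (starRingEnd ℂ) (f t) + f t * (starRingEnd ℂ) f') t := by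
    convert hf.mul hf.star using 1 <;> rfl
  have h2 := Complex.reCLM.hasFDerivAt.comp_hasDerivAt t h1
  have h3 : (fun u => Complex.reCLM (f u * (starRingEnd ℂ) (f u)))
      = fun u => Complex.normSq (f u) := by
    funext u
    simp [Complex.mul_conj]
  rw [Function.comp_def, h3] at h2
  exact h2

private lemma energy_hasDerivAt (α : ℕ → ℝ → ℂ) (N : ℕ)
    (hsupp : ∀ n, N ≤ n → ∀ t : ℝ, α n t = 0)
    (hdiff : ∀ n, Differentiable ℝ (α n))
    (hflow : ∀ (n : ℕ) (t : ℝ),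
      Complex.I * ((n : ℂ) + 1) * deriv (α n) t =
        ∑' j : ℕ, ∑ k ∈ Finset.range (n + j + 1),
          ((min (min n j) (min k (n + j - k)) + 1 : ℕ) : ℂ) *
            (starRingEnd ℂ) (α j t) * α k t * α (n + j - k) t) (t : ℝ) :
    HasDerivAt (fun u => ∑ n ∈ Finset.range N, ((n : ℝ) + 1) ^ 2 * Complex.normSq (α n u)) 0 t := by
  -- finite-sum version of the flow
  have hG : ∀ n : ℕ, Complex.I * ((n : ℂ) + 1) * deriv (α n) t =
      ∑ j ∈ Finset.range N, ∑ k ∈ Finset.range (n + j + 1),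
        ((min (min n j) (min k (n + j - k)) + 1 : ℕ) : ℂ) *
          (starRingEnd ℂ) (α j t) * α k t * α (n + j - k) t := by
    intro n
    rw [hflow n t]
    refine tsum_eq_sum ?_
    intro j hj
    refine Finset.sum_eq_zero fun k _ => ?_
    rw [hsupp j (by simpa using hj) t]
    simp
  have hd : ∀ n : ℕ, HasDerivAt (α n) (deriv (α n) t) t :=
    fun n => ((hdiff n) t).hasDerivAt
  have h1 : ∀ n ∈ Finset.range N, HasDerivAt (fun u => ((n : ℝ) + 1) ^ 2 * Complex.normSq (α n u))
      (((n : ℝ) + 1) ^ 2 *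
        (deriv (α n) t * (starRingEnd ℂ) (α n t) +
          α n t * (starRingEnd ℂ) (deriv (α n) t)).re) t :=
    fun n _ => (hasDerivAt_normSq_comp (hd n)).const_mul _
  have hsum := HasDerivAt.sum h1
  have hval : ∑ n ∈ Finset.range N, ((n : ℝ) + 1) ^ 2 *
      (deriv (α n) t * (starRingEnd ℂ) (α n t) +
        α n t * (starRingEnd ℂ) (deriv (α n) t)).re = 0 := by
    -- per-term rewrite
    have hterm : ∀ n : ℕ, ((n : ℝ) + 1) ^ 2 *
        (deriv (α n) t * (starRingEnd ℂ) (α n t) +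
          α n t * (starRingEnd ℂ) (deriv (α n) t)).re
        = 2 * (((n : ℂ) + 1) * (starRingEnd ℂ) (α n t) *
            ∑ j ∈ Finset.range N, ∑ k ∈ Finset.range (n + j + 1),
              ((min (min n j) (min k (n + j - k)) + 1 : ℕ) : ℂ) *
                (starRingEnd ℂ) (α j t) * α k t * α (n + j - k) t).im := by
      intro n
      set d := deriv (α n) t with hdd
      set an := α n t with han
      set G := ∑ j ∈ Finset.range N, ∑ k ∈ Finset.range (n + j + 1),
          ((min (min n j) (min k (n + j - k)) + 1 : ℕ) : ℂ) *
            (starRingEnd ℂ) (α j t) * α k t * α (n + j - k) t with hGG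
      have hkey : ((n : ℂ) + 1) ^ 2 * d * (starRingEnd ℂ) an
          = -Complex.I * (((n : ℂ) + 1) * (starRingEnd ℂ) an * G) := by
        have h := hG n
        rw [← hGG] at h
        linear_combination (-Complex.I * ((n : ℂ) + 1) * (starRingEnd ℂ) an) * h +
          (((n : ℂ) + 1) ^ 2 * d * (starRingEnd ℂ) an) * Complex.I_mul_I
      have hcast : ((((n : ℝ) + 1) ^ 2 : ℝ) : ℂ) = ((n : ℂ) + 1) ^ 2 := by
        push_cast; ring
      have hsplit : ((n : ℂ) + 1) ^ 2 * (d * (starRingEnd ℂ) an + an * (starRingEnd ℂ) d)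
          = ((n : ℂ) + 1) ^ 2 * d * (starRingEnd ℂ) an +
            (starRingEnd ℂ) (((n : ℂ) + 1) ^ 2 * d * (starRingEnd ℂ) an) := by
        simp only [map_mul, map_pow, map_add, map_one, map_natCast, Complex.conj_conj]
        ring
      calc ((n : ℝ) + 1) ^ 2 * (d * (starRingEnd ℂ) an + an * (starRingEnd ℂ) d).re
          = (((((n : ℝ) + 1) ^ 2 : ℝ) : ℂ) *
              (d * (starRingEnd ℂ) an + an * (starRingEnd ℂ) d)).re := by
            rw [Complex.re_ofReal_mul]
        _ = (((n : ℂ) + 1) ^ 2 * (d * (starRingEnd ℂ) an + an * (starRingEnd ℂ) d)).re := by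
            rw [hcast]
        _ = (-Complex.I * (((n : ℂ) + 1) * (starRingEnd ℂ) an * G) +
              (starRingEnd ℂ) (-Complex.I * (((n : ℂ) + 1) * (starRingEnd ℂ) an * G))).re := by
            rw [hsplit, hkey]
        _ = 2 * (((n : ℂ) + 1) * (starRingEnd ℂ) an * G).im := by
            set z := ((n : ℂ) + 1) * (starRingEnd ℂ) an * G
            simp [Complex.add_re, Complex.mul_re, Complex.I_re, Complex.I_im,
              Complex.conj_re, Complex.neg_re]
            ring
    calc ∑ n ∈ Finset.range N, ((n : ℝ) + 1) ^ 2 *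
        (deriv (α n) t * (starRingEnd ℂ) (α n t) +
          α n t * (starRingEnd ℂ) (deriv (α n) t)).re
        = 2 * ∑ n ∈ Finset.range N, (((n : ℂ) + 1) * (starRingEnd ℂ) (α n t) *
            ∑ j ∈ Finset.range N, ∑ k ∈ Finset.range (n + j + 1),
              ((min (min n j) (min k (n + j - k)) + 1 : ℕ) : ℂ) *
                (starRingEnd ℂ) (α j t) * α k t * α (n + j - k) t).im := by
          rw [Finset.mul_sum]
          exact Finset.sum_congr rfl fun n _ => hterm n
      _ = 2 * (∑ n ∈ Finset.range N, ((n : ℂ) + 1) * (starRingEnd ℂ) (α n t) *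
            ∑ j ∈ Finset.range N, ∑ k ∈ Finset.range (n + j + 1),
              ((min (min n j) (min k (n + j - k)) + 1 : ℕ) : ℂ) *
                (starRingEnd ℂ) (α j t) * α k t * α (n + j - k) t).im := by
          rw [Complex.im_sum]
      _ = 0 := by
          rw [symm_core (fun n => α n t) N (fun n hn => hsupp n hn t)]
          ring
  rw [hval, Finset.sum_fn] at hsum
  exact hsum

theorem stmt_6 (α : ℕ → ℝ → ℂ) (N : ℕ)
    (hsupp : ∀ n, N ≤ n → ∀ t : ℝ, α n t = 0)
    (hdiff : ∀ n, Differentiable ℝ (α n))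
    (hflow : ∀ (n : ℕ) (t : ℝ),
      Complex.I * ((n : ℂ) + 1) * deriv (α n) t =
        ∑' j : ℕ, ∑ k ∈ Finset.range (n + j + 1),
          ((min (min n j) (min k (n + j - k)) + 1 : ℕ) : ℂ) *
            (starRingEnd ℂ) (α j t) * α k t * α (n + j - k) t) :
    ∀ t s : ℝ,
      (∑' n : ℕ, ((n : ℝ) + 1) ^ 2 * ‖α n t‖ ^ 2) =
      (∑' n : ℕ, ((n : ℝ) + 1) ^ 2 * ‖α n s‖ ^ 2) := by
  intro t s
  have hE : ∀ u : ℝ, (∑' n : ℕ, ((n : ℝ) + 1) ^ 2 * ‖α n u‖ ^ 2)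
      = ∑ n ∈ Finset.range N, ((n : ℝ) + 1) ^ 2 * Complex.normSq (α n u) := by
    intro u
    rw [tsum_eq_sum (s := Finset.range N) ?_]
    · exact Finset.sum_congr rfl fun n _ => by rw [Complex.sq_norm]
    · intro n hn
      rw [hsupp n (by simpa using hn) u]
      simp
  rw [hE t, hE s]
  exact is_const_of_deriv_eq_zero
    (fun u => (energy_hasDerivAt α N hsupp hdiff hflow u).differentiableAt)
    (fun u => (energy_hasDerivAt α N hsupp hdiff hflow u).deriv) t s
end

section
/- Along any finitely supported solution of the conformal flow, the Hamiltonian H = ∑ₙ ∑ⱼ ∑_{k=0}^{n+j} (min(n,j,k,n+j-k)+1) conj(αₙ) conj(α_j) α_k α_{n+j-k} is conserved. -/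
open Finset Complex

noncomputable def EE (n j k l : ℕ) : ℂ :=
  if k + l = n + j then ((min (min n j) (min k l) + 1 : ℕ) : ℂ) else 0

lemma EE_symm1 (n j k l : ℕ) : EE j n k l = EE n j k l := by
  unfold EE; rw [Nat.add_comm j n, min_comm j n]

lemma EE_symm2 (n j k l : ℕ) : EE n j l k = EE n j k l := by
  unfold EE; rw [Nat.add_comm l k, min_comm l k]

lemma EE_swap (n j k l : ℕ) : EE k l n j = EE n j k l := by
  unfold EE; rw [min_comm (min k l) (min n j)]
  exact if_congr eq_comm rfl rfl

lemma EE_star (n j k l : ℕ) : (starRingEnd ℂ) (EE n j k l) = EE n j k l := by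
  unfold EE; split <;> simp

lemma L1 (f : ℕ → ℕ → ℂ) (m M : ℕ) (hm : m < M) :
    ∑ k ∈ range (m + 1), f k (m - k) =
      ∑ k ∈ range M, ∑ l ∈ range M, if k + l = m then f k l else 0 := by
  have h1 : ∀ k ∈ range M, (∑ l ∈ range M, if k + l = m then f k l else 0)
      = if k ∈ range (m + 1) then f k (m - k) else 0 := by
    intro k _
    by_cases hkm : k ≤ m
    · have hc : ∀ l, (k + l = m) = (l = m - k) := fun l => propext (by omega)
      simp only [hc]
      rw [Finset.sum_ite_eq' (range M) (m - k) (fun l => f k l)]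
      rw [if_pos (mem_range.mpr (by omega)), if_pos (mem_range.mpr (by omega))]
    · rw [if_neg (by simp only [mem_range]; omega)]
      exact Finset.sum_eq_zero fun l _ => if_neg (by omega)
  rw [Finset.sum_congr rfl h1, Finset.sum_ite_mem,
    Finset.inter_eq_right.mpr (Finset.range_subset_range.mpr (by omega))]

noncomputable def Gfun (α : ℕ → ℝ → ℂ) (M : ℕ) (u : ℝ) : ℂ :=
  ∑ n ∈ range M, ∑ j ∈ range M, ∑ k ∈ range M, ∑ l ∈ range M,
    EE n j k l * (starRingEnd ℂ) (α n u) * (starRingEnd ℂ) (α j u) * α k u * α l u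

noncomputable def Cfun (α : ℕ → ℝ → ℂ) (M : ℕ) (n : ℕ) (u : ℝ) : ℂ :=
  ∑ j ∈ range M, ∑ k ∈ range M, ∑ l ∈ range M,
    EE n j k l * (starRingEnd ℂ) (α j u) * α k u * α l u

lemma Hred (α : ℕ → ℝ → ℂ) (N : ℕ) (hsupp : ∀ n, N ≤ n → ∀ t : ℝ, α n t = 0) (u : ℝ) :
    (∑' n : ℕ, ∑' j : ℕ, ∑ k ∈ Finset.range (n + j + 1),
        ((min (min n j) (min k (n + j - k)) + 1 : ℕ) : ℂ) *
          (starRingEnd ℂ) (α n u) * (starRingEnd ℂ) (α j u) * α k u * α (n + j - k) u)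
      = Gfun α (2 * N) u := by
  have hz : ∀ n, N ≤ n → (starRingEnd ℂ) (α n u) = 0 := by
    intro n hn; rw [hsupp n hn u, map_zero]
  have houter : ∀ n ∉ range N, (∑' j : ℕ, ∑ k ∈ Finset.range (n + j + 1),
      ((min (min n j) (min k (n + j - k)) + 1 : ℕ) : ℂ) *
        (starRingEnd ℂ) (α n u) * (starRingEnd ℂ) (α j u) * α k u * α (n + j - k) u) = 0 := by
    intro n hn
    have h0 : (starRingEnd ℂ) (α n u) = 0 := hz n (by simpa using hn)
    have h1 : ∀ j : ℕ, (∑ k ∈ Finset.range (n + j + 1),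
        ((min (min n j) (min k (n + j - k)) + 1 : ℕ) : ℂ) *
          (starRingEnd ℂ) (α n u) * (starRingEnd ℂ) (α j u) * α k u * α (n + j - k) u) = 0 :=
      fun j => Finset.sum_eq_zero fun k _ => by rw [h0]; ring
    simp only [h1, tsum_zero]
  rw [tsum_eq_sum houter]
  have hstep : ∀ n ∈ range N,
      (∑' j : ℕ, ∑ k ∈ Finset.range (n + j + 1),
        ((min (min n j) (min k (n + j - k)) + 1 : ℕ) : ℂ) *
          (starRingEnd ℂ) (α n u) * (starRingEnd ℂ) (α j u) * α k u * α (n + j - k) u)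
      = ∑ j ∈ range (2 * N), ∑ k ∈ range (2 * N), ∑ l ∈ range (2 * N),
          EE n j k l * (starRingEnd ℂ) (α n u) * (starRingEnd ℂ) (α j u) * α k u * α l u := by
    intro n hn
    rw [mem_range] at hn
    have hinner : ∀ j ∉ range N, (∑ k ∈ Finset.range (n + j + 1),
        ((min (min n j) (min k (n + j - k)) + 1 : ℕ) : ℂ) *
          (starRingEnd ℂ) (α n u) * (starRingEnd ℂ) (α j u) * α k u * α (n + j - k) u) = 0 :=
      fun j hj => Finset.sum_eq_zero fun k _ => by rw [hz j (by simpa using hj)]; ring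
    rw [tsum_eq_sum hinner]
    have hjstep : ∀ j ∈ range N,
        (∑ k ∈ Finset.range (n + j + 1),
          ((min (min n j) (min k (n + j - k)) + 1 : ℕ) : ℂ) *
            (starRingEnd ℂ) (α n u) * (starRingEnd ℂ) (α j u) * α k u * α (n + j - k) u)
        = ∑ k ∈ range (2 * N), ∑ l ∈ range (2 * N),
            EE n j k l * (starRingEnd ℂ) (α n u) * (starRingEnd ℂ) (α j u) * α k u * α l u := by
      intro j hj
      rw [mem_range] at hj
      rw [L1 (fun k l => ((min (min n j) (min k l) + 1 : ℕ) : ℂ) *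
            (starRingEnd ℂ) (α n u) * (starRingEnd ℂ) (α j u) * α k u * α l u)
          (n + j) (2 * N) (by omega)]
      simp only [EE, ite_mul, zero_mul]
    rw [Finset.sum_congr rfl hjstep]
    exact Finset.sum_subset (Finset.range_subset_range.mpr (by omega)) fun j _ hj =>
      Finset.sum_eq_zero fun k _ => Finset.sum_eq_zero fun l _ => by
        rw [hz j (by simpa using hj)]; ring
  rw [Finset.sum_congr rfl hstep]
  exact Finset.sum_subset (Finset.range_subset_range.mpr (by omega)) fun n _ hn =>
    Finset.sum_eq_zero fun j _ => Finset.sum_eq_zero fun k _ => Finset.sum_eq_zero fun l _ => by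
      rw [hz n (by simpa using hn)]; ring

lemma flowC (α : ℕ → ℝ → ℂ) (N : ℕ) (hsupp : ∀ n, N ≤ n → ∀ t : ℝ, α n t = 0)
    (hflow : ∀ (n : ℕ) (t : ℝ),
      Complex.I * ((n : ℂ) + 1) * deriv (α n) t =
        ∑' j : ℕ, ∑ k ∈ Finset.range (n + j + 1),
          ((min (min n j) (min k (n + j - k)) + 1 : ℕ) : ℂ) *
            (starRingEnd ℂ) (α j t) * α k t * α (n + j - k) t)
    (n : ℕ) (hn : n < N) (u : ℝ) :
    Cfun α (2 * N) n u = Complex.I * ((n : ℂ) + 1) * deriv (α n) u := by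
  have hz : ∀ j, N ≤ j → (starRingEnd ℂ) (α j u) = 0 := by
    intro j hj; rw [hsupp j hj u, map_zero]
  rw [hflow n u]
  have hinner : ∀ j ∉ range N, (∑ k ∈ Finset.range (n + j + 1),
      ((min (min n j) (min k (n + j - k)) + 1 : ℕ) : ℂ) *
        (starRingEnd ℂ) (α j u) * α k u * α (n + j - k) u) = 0 :=
    fun j hj => Finset.sum_eq_zero fun k _ => by rw [hz j (by simpa using hj)]; ring
  rw [tsum_eq_sum hinner]
  have hjstep : ∀ j ∈ range N,
      (∑ k ∈ Finset.range (n + j + 1),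
        ((min (min n j) (min k (n + j - k)) + 1 : ℕ) : ℂ) *
          (starRingEnd ℂ) (α j u) * α k u * α (n + j - k) u)
      = ∑ k ∈ range (2 * N), ∑ l ∈ range (2 * N),
          EE n j k l * (starRingEnd ℂ) (α j u) * α k u * α l u := by
    intro j hj
    rw [mem_range] at hj
    rw [L1 (fun k l => ((min (min n j) (min k l) + 1 : ℕ) : ℂ) *
          (starRingEnd ℂ) (α j u) * α k u * α l u) (n + j) (2 * N) (by omega)]
    simp only [EE, ite_mul, zero_mul]
  rw [Finset.sum_congr rfl hjstep]
  unfold Cfun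
  exact (Finset.sum_subset (Finset.range_subset_range.mpr (by omega)) fun j _ hj =>
    Finset.sum_eq_zero fun k _ => Finset.sum_eq_zero fun l _ => by
      rw [hz j (by simpa using hj)]; ring).symm

lemma alg (a d : ℕ → ℂ) (N M : ℕ)
    (hC : ∀ n, n < N →
      (∑ j ∈ range M, ∑ k ∈ range M, ∑ l ∈ range M,
        EE n j k l * (starRingEnd ℂ) (a j) * a k * a l) = Complex.I * ((n : ℂ) + 1) * d n)
    (hd0 : ∀ n, N ≤ n → d n = 0) :
    (∑ n ∈ range M, ∑ j ∈ range M, ∑ k ∈ range M, ∑ l ∈ range M,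
      (EE n j k l * (starRingEnd ℂ) (d n) * (starRingEnd ℂ) (a j) * a k * a l
      + EE n j k l * (starRingEnd ℂ) (a n) * (starRingEnd ℂ) (d j) * a k * a l
      + EE n j k l * (starRingEnd ℂ) (a n) * (starRingEnd ℂ) (a j) * d k * a l
      + EE n j k l * (starRingEnd ℂ) (a n) * (starRingEnd ℂ) (a j) * a k * d l)) = 0 := by
  set C : ℕ → ℂ := fun n =>
    ∑ j ∈ range M, ∑ k ∈ range M, ∑ l ∈ range M,
      EE n j k l * (starRingEnd ℂ) (a j) * a k * a l with hCdef
  simp only [Finset.sum_add_distrib]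
  have e1 : (∑ n ∈ range M, ∑ j ∈ range M, ∑ k ∈ range M, ∑ l ∈ range M,
      EE n j k l * (starRingEnd ℂ) (d n) * (starRingEnd ℂ) (a j) * a k * a l)
      = ∑ n ∈ range M, (starRingEnd ℂ) (d n) * C n := by
    apply Finset.sum_congr rfl; intro n _
    simp only [hCdef, Finset.mul_sum]
    apply Finset.sum_congr rfl; intro j _
    apply Finset.sum_congr rfl; intro k _
    apply Finset.sum_congr rfl; intro l _
    ring
  have e2 : (∑ n ∈ range M, ∑ j ∈ range M, ∑ k ∈ range M, ∑ l ∈ range M,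
      EE n j k l * (starRingEnd ℂ) (a n) * (starRingEnd ℂ) (d j) * a k * a l)
      = ∑ n ∈ range M, (starRingEnd ℂ) (d n) * C n := by
    rw [Finset.sum_comm]
    rw [← e1]
    apply Finset.sum_congr rfl; intro n _
    apply Finset.sum_congr rfl; intro j _
    apply Finset.sum_congr rfl; intro k _
    apply Finset.sum_congr rfl; intro l _
    rw [EE_symm1]; ring
  have e3 : (∑ n ∈ range M, ∑ j ∈ range M, ∑ k ∈ range M, ∑ l ∈ range M,
      EE n j k l * (starRingEnd ℂ) (a n) * (starRingEnd ℂ) (a j) * d k * a l)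
      = ∑ n ∈ range M, d n * (starRingEnd ℂ) (C n) := by
    have step1 : (∑ n ∈ range M, ∑ j ∈ range M, ∑ k ∈ range M, ∑ l ∈ range M,
        EE n j k l * (starRingEnd ℂ) (a n) * (starRingEnd ℂ) (a j) * d k * a l)
        = ∑ k ∈ range M, ∑ n ∈ range M, ∑ j ∈ range M, ∑ l ∈ range M,
        EE n j k l * (starRingEnd ℂ) (a n) * (starRingEnd ℂ) (a j) * d k * a l := by
      calc (∑ n ∈ range M, ∑ j ∈ range M, ∑ k ∈ range M, ∑ l ∈ range M,
            EE n j k l * (starRingEnd ℂ) (a n) * (starRingEnd ℂ) (a j) * d k * a l)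
          = ∑ n ∈ range M, ∑ k ∈ range M, ∑ j ∈ range M, ∑ l ∈ range M,
            EE n j k l * (starRingEnd ℂ) (a n) * (starRingEnd ℂ) (a j) * d k * a l :=
            Finset.sum_congr rfl fun n _ => Finset.sum_comm
        _ = ∑ k ∈ range M, ∑ n ∈ range M, ∑ j ∈ range M, ∑ l ∈ range M,
            EE n j k l * (starRingEnd ℂ) (a n) * (starRingEnd ℂ) (a j) * d k * a l :=
            Finset.sum_comm
    rw [step1]
    apply Finset.sum_congr rfl; intro k _
    have hconj : (starRingEnd ℂ) (C k)
        = ∑ n ∈ range M, ∑ j ∈ range M, ∑ l ∈ range M,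
            EE n j k l * (starRingEnd ℂ) (a n) * (starRingEnd ℂ) (a j) * a l := by
      simp only [hCdef, map_sum, map_mul, EE_star, Complex.conj_conj]
      rw [Finset.sum_comm]
      apply Finset.sum_congr rfl; intro n _
      rw [Finset.sum_comm]
      apply Finset.sum_congr rfl; intro j _
      apply Finset.sum_congr rfl; intro l _
      rw [EE_swap]; ring
    rw [hconj, Finset.mul_sum]
    apply Finset.sum_congr rfl; intro n _
    rw [Finset.mul_sum]
    apply Finset.sum_congr rfl; intro j _
    rw [Finset.mul_sum]
    apply Finset.sum_congr rfl; intro l _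
    ring
  have e4 : (∑ n ∈ range M, ∑ j ∈ range M, ∑ k ∈ range M, ∑ l ∈ range M,
      EE n j k l * (starRingEnd ℂ) (a n) * (starRingEnd ℂ) (a j) * a k * d l)
      = ∑ n ∈ range M, d n * (starRingEnd ℂ) (C n) := by
    rw [← e3]
    apply Finset.sum_congr rfl; intro n _
    apply Finset.sum_congr rfl; intro j _
    rw [Finset.sum_comm]
    apply Finset.sum_congr rfl; intro k _
    apply Finset.sum_congr rfl; intro l _
    rw [EE_symm2]; ring
  rw [e1, e2, e3, e4]
  have key : ∀ n ∈ range M, (starRingEnd ℂ) (d n) * C n + d n * (starRingEnd ℂ) (C n) = 0 := by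
    intro n _
    by_cases hn : n < N
    · rw [show C n = Complex.I * ((n : ℂ) + 1) * d n from hC n hn]
      simp only [map_mul, map_add, map_one, Complex.conj_I, Complex.conj_natCast]
      ring
    · simp [hd0 n (le_of_not_gt hn)]
  have key2 : (∑ n ∈ range M, ((starRingEnd ℂ) (d n) * C n + d n * (starRingEnd ℂ) (C n))) = 0 :=
    Finset.sum_eq_zero key
  rw [Finset.sum_add_distrib] at key2
  linear_combination (2 : ℂ) * key2

lemma Gderiv (α : ℕ → ℝ → ℂ) (N : ℕ)
    (hsupp : ∀ n, N ≤ n → ∀ t : ℝ, α n t = 0)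
    (hdiff : ∀ n, Differentiable ℝ (α n))
    (hflow : ∀ (n : ℕ) (t : ℝ),
      Complex.I * ((n : ℂ) + 1) * deriv (α n) t =
        ∑' j : ℕ, ∑ k ∈ Finset.range (n + j + 1),
          ((min (min n j) (min k (n + j - k)) + 1 : ℕ) : ℂ) *
            (starRingEnd ℂ) (α j t) * α k t * α (n + j - k) t)
    (u : ℝ) : HasDerivAt (Gfun α (2 * N)) 0 u := by
  have hbig : HasDerivAt (Gfun α (2 * N))
      (∑ n ∈ range (2 * N), ∑ j ∈ range (2 * N), ∑ k ∈ range (2 * N), ∑ l ∈ range (2 * N),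
        (EE n j k l * (starRingEnd ℂ) (deriv (α n) u) * (starRingEnd ℂ) (α j u) * α k u * α l u
        + EE n j k l * (starRingEnd ℂ) (α n u) * (starRingEnd ℂ) (deriv (α j) u) * α k u * α l u
        + EE n j k l * (starRingEnd ℂ) (α n u) * (starRingEnd ℂ) (α j u) * deriv (α k) u * α l u
        + EE n j k l * (starRingEnd ℂ) (α n u) * (starRingEnd ℂ) (α j u) * α k u * deriv (α l) u)) u := by
    have hda : ∀ n, HasDerivAt (α n) (deriv (α n) u) u := fun n => (hdiff n u).hasDerivAt
    have hsa : ∀ n, HasDerivAt (fun v => (starRingEnd ℂ) (α n v))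
        ((starRingEnd ℂ) (deriv (α n) u)) u := fun n => (hda n).star
    unfold Gfun
    apply HasDerivAt.fun_sum; intro n _
    apply HasDerivAt.fun_sum; intro j _
    apply HasDerivAt.fun_sum; intro k _
    apply HasDerivAt.fun_sum; intro l _
    have h := ((((hsa n).const_mul (EE n j k l)).mul (hsa j)).mul (hda k)).mul (hda l)
    convert h using 1
    case e'_4 => rfl
    case e'_8 => funext y; simp only [Pi.mul_apply]
    case e'_9 => simp only [Pi.mul_apply]; ring
  have hzero := alg (fun n => α n u) (fun n => deriv (α n) u) N (2 * N)
    (fun n hn => by simpa [Cfun] using flowC α N hsupp hflow n hn u)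
    (fun n hn => by
      show deriv (α n) u = 0
      have h : α n = fun _ => (0 : ℂ) := funext fun t => hsupp n hn t
      rw [h]; exact deriv_const u 0)
  rw [hzero] at hbig
  exact hbig

theorem stmt_7 (α : ℕ → ℝ → ℂ) (N : ℕ)
    (hsupp : ∀ n, N ≤ n → ∀ t : ℝ, α n t = 0)
    (hdiff : ∀ n, Differentiable ℝ (α n))
    (hflow : ∀ (n : ℕ) (t : ℝ),
      Complex.I * ((n : ℂ) + 1) * deriv (α n) t =
        ∑' j : ℕ, ∑ k ∈ Finset.range (n + j + 1),
          ((min (min n j) (min k (n + j - k)) + 1 : ℕ) : ℂ) *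
            (starRingEnd ℂ) (α j t) * α k t * α (n + j - k) t) :
    ∀ t s : ℝ,
      (∑' n : ℕ, ∑' j : ℕ, ∑ k ∈ Finset.range (n + j + 1),
        ((min (min n j) (min k (n + j - k)) + 1 : ℕ) : ℂ) *
          (starRingEnd ℂ) (α n t) * (starRingEnd ℂ) (α j t) * α k t * α (n + j - k) t) =
      (∑' n : ℕ, ∑' j : ℕ, ∑ k ∈ Finset.range (n + j + 1),
        ((min (min n j) (min k (n + j - k)) + 1 : ℕ) : ℂ) *
          (starRingEnd ℂ) (α n s) * (starRingEnd ℂ) (α j s) * α k s * α (n + j - k) s) := by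
  intro t s
  rw [Hred α N hsupp t, Hred α N hsupp s]
  exact is_const_of_deriv_eq_zero
    (fun x => (Gderiv α N hsupp hdiff hflow x).differentiableAt)
    (fun x => (Gderiv α N hsupp hdiff hflow x).deriv) t s
end

section
/- Given real constants M, P with M, P > 0 and real initial data a₀, b₀, p₀, the functions a(t) = a₀ e^{-iMt}, b(t) = (b₀ cos(ωt) - i (b₀(M+P) + 2a₀p₀P)/(2ω) sin(ωt)) e^{-i(M+P)t/2}, p(t) = (p₀ cos(ωt) - i (p₀(M+P) + 2a₀b₀)/(2ω) sin(ωt)) e^{-i(M-P)t/2}, with ω = (1/2)√((M+P)² - 4Pa₀²) assumed real and nonzero, solve the system i ȧ = M a, i ḃ = (M+P) b + P a conj(p), i ṗ = M p + a conj(b), provided M = |b₀|² + |a₀+b₀p₀|²/(1-p₀²) and P = |a₀+b₀p₀|²/(1-p₀²)². -/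
open Complex

lemma aux_deriv (c₁ c₂ ω d : ℝ) (t : ℝ) :
    HasDerivAt (fun t : ℝ => ((c₁ : ℂ) * Real.cos (ω * t) -
        Complex.I * (c₂ : ℝ) * Real.sin (ω * t)) * Complex.exp (-Complex.I * (d : ℝ) * t))
      (((-(c₁ * ω * Real.sin (ω * t)) : ℝ) -
          Complex.I * ((c₂ * ω * Real.cos (ω * t) : ℝ))) * Complex.exp (-Complex.I * d * t)
        + ((c₁ : ℂ) * Real.cos (ω * t) - Complex.I * (c₂ : ℝ) * Real.sin (ω * t)) *
          (-Complex.I * d * Complex.exp (-Complex.I * d * t))) t := by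
  have hlin : HasDerivAt (fun t : ℝ => ω * t) ω t := by
    simpa using (hasDerivAt_id t).const_mul ω
  have hcos : HasDerivAt (fun t : ℝ => Real.cos (ω * t)) (-(Real.sin (ω * t)) * ω) t :=
    (Real.hasDerivAt_cos (ω * t)).comp t hlin
  have hsin : HasDerivAt (fun t : ℝ => Real.sin (ω * t)) (Real.cos (ω * t) * ω) t :=
    (Real.hasDerivAt_sin (ω * t)).comp t hlin
  have hcosC := hcos.ofReal_comp
  have hsinC := hsin.ofReal_comp
  have hexp : HasDerivAt (fun t : ℝ => Complex.exp (-Complex.I * (d : ℝ) * t))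
      (-Complex.I * d * Complex.exp (-Complex.I * d * t)) t := by
    have hid : HasDerivAt (fun t : ℝ => ((t : ℝ) : ℂ)) 1 t := (hasDerivAt_id t).ofReal_comp
    have := (hid.const_mul (-Complex.I * (d : ℝ))).cexp
    simpa [mul_comm] using this
  have hF : HasDerivAt (fun t : ℝ => ((c₁ : ℂ) * Real.cos (ω * t) -
      Complex.I * (c₂ : ℝ) * Real.sin (ω * t)))
      (((-(c₁ * ω * Real.sin (ω * t)) : ℝ) - Complex.I * ((c₂ * ω * Real.cos (ω * t) : ℝ)))) t := by
    have h1 := hcosC.const_mul (c₁ : ℂ)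
    have h2 := hsinC.const_mul (Complex.I * (c₂ : ℝ))
    have := h1.sub h2
    refine HasDerivAt.congr_deriv this ?_
    push_cast
    ring
  exact hF.mul hexp

lemma coef2 (a₀ b₀ p₀ M P ω co si : ℝ) (hωne : ω ≠ 0)
    (hω2 : 4 * ω ^ 2 = (M + P) ^ 2 - 4 * P * a₀ ^ 2) :
    Complex.I * (((-(b₀ * ω * si) : ℝ) - Complex.I * ((b₀ * (M + P) + 2 * a₀ * p₀ * P) / (2 * ω) * ω * co : ℝ))
      + ((b₀ : ℂ) * (co : ℝ) - Complex.I * ((b₀ * (M + P) + 2 * a₀ * p₀ * P) / (2 * ω) : ℝ) * (si : ℝ)) * (-Complex.I * ((M + P) / 2 : ℝ)))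
    = ((M : ℂ) + P) * ((b₀ : ℂ) * (co : ℝ) - Complex.I * ((b₀ * (M + P) + 2 * a₀ * p₀ * P) / (2 * ω) : ℝ) * (si : ℝ))
      + (P : ℂ) * (a₀ : ℝ) * ((p₀ : ℂ) * (co : ℝ) + Complex.I * ((p₀ * (M + P) + 2 * a₀ * b₀) / (2 * ω) : ℝ) * (si : ℝ)) := by
  apply Complex.ext <;>
    simp only [Complex.add_re, Complex.add_im, Complex.sub_re, Complex.sub_im, Complex.mul_re,
      Complex.mul_im, Complex.I_re, Complex.I_im, Complex.ofReal_re, Complex.ofReal_im,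
      Complex.neg_re, Complex.neg_im] <;>
    field_simp <;>
    ring_nf
  linear_combination (-(b₀ * si)) * hω2

lemma coef3 (a₀ b₀ p₀ M P ω co si : ℝ) (hωne : ω ≠ 0)
    (hω2 : 4 * ω ^ 2 = (M + P) ^ 2 - 4 * P * a₀ ^ 2) :
    Complex.I * (((-(p₀ * ω * si) : ℝ) - Complex.I * ((p₀ * (M + P) + 2 * a₀ * b₀) / (2 * ω) * ω * co : ℝ))
      + ((p₀ : ℂ) * (co : ℝ) - Complex.I * ((p₀ * (M + P) + 2 * a₀ * b₀) / (2 * ω) : ℝ) * (si : ℝ)) * (-Complex.I * ((M - P) / 2 : ℝ)))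
    = (M : ℂ) * ((p₀ : ℂ) * (co : ℝ) - Complex.I * ((p₀ * (M + P) + 2 * a₀ * b₀) / (2 * ω) : ℝ) * (si : ℝ))
      + (a₀ : ℂ) * ((b₀ : ℂ) * (co : ℝ) + Complex.I * ((b₀ * (M + P) + 2 * a₀ * p₀ * P) / (2 * ω) : ℝ) * (si : ℝ)) := by
  apply Complex.ext <;>
    simp only [Complex.add_re, Complex.add_im, Complex.sub_re, Complex.sub_im, Complex.mul_re,
      Complex.mul_im, Complex.I_re, Complex.I_im, Complex.ofReal_re, Complex.ofReal_im,
      Complex.neg_re, Complex.neg_im] <;>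
    field_simp <;>
    ring_nf
  linear_combination (-(p₀ * si)) * hω2

theorem stmt_9 (a₀ b₀ p₀ M P ω : ℝ) (hp₀ : |p₀| < 1)
    (hM : M = b₀ ^ 2 + (a₀ + b₀ * p₀) ^ 2 / (1 - p₀ ^ 2))
    (hP : P = (a₀ + b₀ * p₀) ^ 2 / (1 - p₀ ^ 2) ^ 2)
    (hMpos : 0 < M) (hPpos : 0 < P)
    (hdisc : 0 ≤ (M + P) ^ 2 - 4 * P * a₀ ^ 2)
    (hω : ω = (1 / 2) * Real.sqrt ((M + P) ^ 2 - 4 * P * a₀ ^ 2))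
    (hωne : ω ≠ 0)
    (a b p : ℝ → ℂ)
    (ha : ∀ t : ℝ, a t = (a₀ : ℂ) * Complex.exp (-Complex.I * M * t))
    (hb : ∀ t : ℝ, b t =
      ((b₀ : ℂ) * Real.cos (ω * t) -
        Complex.I * ((b₀ * (M + P) + 2 * a₀ * p₀ * P) / (2 * ω) : ℝ) * Real.sin (ω * t)) *
        Complex.exp (-Complex.I * ((M + P) / 2 : ℝ) * t))
    (hp : ∀ t : ℝ, p t =
      ((p₀ : ℂ) * Real.cos (ω * t) -
        Complex.I * ((p₀ * (M + P) + 2 * a₀ * b₀) / (2 * ω) : ℝ) * Real.sin (ω * t)) *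
        Complex.exp (-Complex.I * ((M - P) / 2 : ℝ) * t)) :
    ∀ t : ℝ,
      Complex.I * deriv a t = (M : ℂ) * a t ∧
      Complex.I * deriv b t = ((M : ℂ) + P) * b t + (P : ℂ) * a t * (starRingEnd ℂ) (p t) ∧
      Complex.I * deriv p t = (M : ℂ) * p t + a t * (starRingEnd ℂ) (b t) := by
  intro t
  have hω2 : 4 * ω ^ 2 = (M + P) ^ 2 - 4 * P * a₀ ^ 2 := by
    rw [hω, mul_pow, Real.sq_sqrt hdisc]; ring
  have hafun : a = fun t : ℝ => (a₀ : ℂ) * Complex.exp (-Complex.I * M * t) := funext ha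
  have hbfun : b = fun t : ℝ =>
      ((b₀ : ℂ) * Real.cos (ω * t) -
        Complex.I * ((b₀ * (M + P) + 2 * a₀ * p₀ * P) / (2 * ω) : ℝ) * Real.sin (ω * t)) *
        Complex.exp (-Complex.I * ((M + P) / 2 : ℝ) * t) := funext hb
  have hpfun : p = fun t : ℝ =>
      ((p₀ : ℂ) * Real.cos (ω * t) -
        Complex.I * ((p₀ * (M + P) + 2 * a₀ * b₀) / (2 * ω) : ℝ) * Real.sin (ω * t)) *
        Complex.exp (-Complex.I * ((M - P) / 2 : ℝ) * t) := funext hp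
  have hda : deriv a t = (a₀ : ℂ) * (-Complex.I * M * Complex.exp (-Complex.I * M * t)) := by
    rw [hafun]
    have hid : HasDerivAt (fun t : ℝ => ((t : ℝ) : ℂ)) 1 t := (hasDerivAt_id t).ofReal_comp
    have hexp : HasDerivAt (fun t : ℝ => Complex.exp (-Complex.I * (M : ℝ) * t))
        (-Complex.I * M * Complex.exp (-Complex.I * M * t)) t := by
      have := (hid.const_mul (-Complex.I * (M : ℝ))).cexp
      simpa [mul_comm] using this
    exact (hexp.const_mul (a₀ : ℂ)).deriv
  have hdb : deriv b t =
      (((-(b₀ * ω * Real.sin (ω * t)) : ℝ) - Complex.I *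
          (((b₀ * (M + P) + 2 * a₀ * p₀ * P) / (2 * ω)) * ω * Real.cos (ω * t) : ℝ)) *
            Complex.exp (-Complex.I * ((M + P) / 2 : ℝ) * t)
        + ((b₀ : ℂ) * Real.cos (ω * t) - Complex.I *
            ((b₀ * (M + P) + 2 * a₀ * p₀ * P) / (2 * ω) : ℝ) * Real.sin (ω * t)) *
          (-Complex.I * ((M + P) / 2 : ℝ) * Complex.exp (-Complex.I * ((M + P) / 2 : ℝ) * t))) := by
    rw [hbfun]
    exact (aux_deriv b₀ ((b₀ * (M + P) + 2 * a₀ * p₀ * P) / (2 * ω)) ω ((M + P) / 2) t).deriv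
  have hdp : deriv p t =
      (((-(p₀ * ω * Real.sin (ω * t)) : ℝ) - Complex.I *
          (((p₀ * (M + P) + 2 * a₀ * b₀) / (2 * ω)) * ω * Real.cos (ω * t) : ℝ)) *
            Complex.exp (-Complex.I * ((M - P) / 2 : ℝ) * t)
        + ((p₀ : ℂ) * Real.cos (ω * t) - Complex.I *
            ((p₀ * (M + P) + 2 * a₀ * b₀) / (2 * ω) : ℝ) * Real.sin (ω * t)) *
          (-Complex.I * ((M - P) / 2 : ℝ) * Complex.exp (-Complex.I * ((M - P) / 2 : ℝ) * t))) := by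
    rw [hpfun]
    exact (aux_deriv p₀ ((p₀ * (M + P) + 2 * a₀ * b₀) / (2 * ω)) ω ((M - P) / 2) t).deriv
  have hconjexp : ∀ d : ℝ, (starRingEnd ℂ) (Complex.exp (-Complex.I * (d : ℝ) * t)) =
      Complex.exp (Complex.I * (d : ℝ) * t) := by
    intro d
    rw [← Complex.exp_conj]
    congr 1
    simp [Complex.conj_ofReal]
  have hconjp : (starRingEnd ℂ) (p t) =
      ((p₀ : ℂ) * Real.cos (ω * t) +
        Complex.I * ((p₀ * (M + P) + 2 * a₀ * b₀) / (2 * ω) : ℝ) * Real.sin (ω * t)) *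
        Complex.exp (Complex.I * ((M - P) / 2 : ℝ) * t) := by
    rw [hp, map_mul, hconjexp]
    simp only [map_sub, map_mul, Complex.conj_ofReal, Complex.conj_I]
    ring
  have hconjb : (starRingEnd ℂ) (b t) =
      ((b₀ : ℂ) * Real.cos (ω * t) +
        Complex.I * ((b₀ * (M + P) + 2 * a₀ * p₀ * P) / (2 * ω) : ℝ) * Real.sin (ω * t)) *
        Complex.exp (Complex.I * ((M + P) / 2 : ℝ) * t) := by
    rw [hb, map_mul, hconjexp]
    simp only [map_sub, map_mul, Complex.conj_ofReal, Complex.conj_I]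
    ring
  have hexp2 : Complex.exp (-Complex.I * (M : ℝ) * t) * Complex.exp (Complex.I * ((M - P) / 2 : ℝ) * t)
      = Complex.exp (-Complex.I * ((M + P) / 2 : ℝ) * t) := by
    rw [← Complex.exp_add]; congr 1; push_cast; ring
  have hexp3 : Complex.exp (-Complex.I * (M : ℝ) * t) * Complex.exp (Complex.I * ((M + P) / 2 : ℝ) * t)
      = Complex.exp (-Complex.I * ((M - P) / 2 : ℝ) * t) := by
    rw [← Complex.exp_add]; congr 1; push_cast; ring
  refine ⟨?_, ?_, ?_⟩
  · rw [hda, ha]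
    linear_combination (-(a₀ : ℂ) * M * Complex.exp (-Complex.I * M * t)) * Complex.I_sq
  · rw [hdb, hb, ha, hconjp]
    have hc := coef2 a₀ b₀ p₀ M P ω (Real.cos (ω * t)) (Real.sin (ω * t)) hωne hω2
    linear_combination (Complex.exp (-Complex.I * ((M + P) / 2 : ℝ) * t)) * hc +
      (-(P : ℂ) * (a₀ : ℝ) * ((p₀ : ℂ) * Real.cos (ω * t) +
        Complex.I * ((p₀ * (M + P) + 2 * a₀ * b₀) / (2 * ω) : ℝ) * Real.sin (ω * t))) * hexp2
  · rw [hdp, hp, ha, hconjb]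
    have hc := coef3 a₀ b₀ p₀ M P ω (Real.cos (ω * t)) (Real.sin (ω * t)) hωne hω2
    linear_combination (Complex.exp (-Complex.I * ((M - P) / 2 : ℝ) * t)) * hc +
      (-(a₀ : ℂ) * ((b₀ : ℂ) * Real.cos (ω * t) +
        Complex.I * ((b₀ * (M + P) + 2 * a₀ * p₀ * P) / (2 * ω) : ℝ) * Real.sin (ω * t))) * hexp3
end

section
/- Suppose a, b, p : ℝ → ℂ satisfy the Szegő single-pole equations i ȧ = M a, i ḃ = (M+P) b + P a conj(p), i ṗ = M p + a conj(b), where M = |b|² + |a+bp|²/(1-|p|²) and P = |a+bp|²/(1-|p|²)² (with |p(t)| < 1 for all t). Then M and P are constant in time. -/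
set_option maxHeartbeats 2000000
open Complex

lemma normSq_hasDerivAt {f : ℝ → ℂ} {f' : ℂ} {t : ℝ} (hf : HasDerivAt f f' t) :
    HasDerivAt (fun s => Complex.normSq (f s)) (2 * (f' * (starRingEnd ℂ) (f t)).re) t := by
  have hre : HasDerivAt (fun s => (f s).re) f'.re t :=
    Complex.reCLM.hasFDerivAt.comp_hasDerivAt t hf
  have him : HasDerivAt (fun s => (f s).im) f'.im t :=
    Complex.imCLM.hasFDerivAt.comp_hasDerivAt t hf
  have h : HasDerivAt (fun s => (f s).re * (f s).re + (f s).im * (f s).im) _ t :=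
    (hre.mul hre).add (him.mul him)
  have : (fun s => (f s).re * (f s).re + (f s).im * (f s).im)
      = fun s => Complex.normSq (f s) := by
    funext s; simp [Complex.normSq_apply]
  rw [this] at h
  convert h using 1
  simp [Complex.mul_re]
  ring

theorem stmt_10 (a b p : ℝ → ℂ) (M P : ℝ → ℝ)
    (hda : Differentiable ℝ a) (hdb : Differentiable ℝ b) (hdp : Differentiable ℝ p)
    (hpbound : ∀ t : ℝ, ‖p t‖ < 1)
    (hM : ∀ t : ℝ, M t = ‖b t‖ ^ 2 +
      ‖a t + b t * p t‖ ^ 2 / (1 - ‖p t‖ ^ 2))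
    (hP : ∀ t : ℝ, P t = ‖a t + b t * p t‖ ^ 2 / (1 - ‖p t‖ ^ 2) ^ 2)
    (ha : ∀ t : ℝ, Complex.I * deriv a t = (M t : ℂ) * a t)
    (hb : ∀ t : ℝ, Complex.I * deriv b t =
      ((M t : ℂ) + (P t : ℂ)) * b t + (P t : ℂ) * a t * (starRingEnd ℂ) (p t))
    (hp : ∀ t : ℝ, Complex.I * deriv p t = (M t : ℂ) * p t + a t * (starRingEnd ℂ) (b t)) :
    ∀ t : ℝ, deriv M t = 0 ∧ deriv P t = 0 := by
  have hMfun : M = fun s => Complex.normSq (b s) +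
      Complex.normSq (a s + b s * p s) / (1 - Complex.normSq (p s)) := by
    funext s; rw [hM s]; simp [Complex.sq_norm]
  have hPfun : P = fun s => Complex.normSq (a s + b s * p s) /
      (1 - Complex.normSq (p s)) ^ 2 := by
    funext s; rw [hP s]; simp [Complex.sq_norm]
  intro t
  have hne : 1 - Complex.normSq (p t) ≠ 0 := by
    have h1 : Complex.normSq (p t) < 1 := by
      have := hpbound t
      rw [← Complex.sq_norm]
      nlinarith [norm_nonneg (p t)]
    linarith
  have ea : deriv a t = -Complex.I * ((M t : ℂ) * a t) := by
    apply mul_left_cancel₀ Complex.I_ne_zero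
    rw [ha t]
    linear_combination ((M t : ℂ) * a t) * Complex.I_sq
  have eb : deriv b t = -Complex.I * (((M t : ℂ) + (P t : ℂ)) * b t +
      (P t : ℂ) * a t * (starRingEnd ℂ) (p t)) := by
    apply mul_left_cancel₀ Complex.I_ne_zero
    rw [hb t]
    linear_combination (((M t:ℂ) + (P t:ℂ)) * b t + (P t:ℂ) * a t * (starRingEnd ℂ) (p t)) * Complex.I_sq
  have ep : deriv p t = -Complex.I * ((M t : ℂ) * p t + a t * (starRingEnd ℂ) (b t)) := by
    apply mul_left_cancel₀ Complex.I_ne_zero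
    rw [hp t]
    linear_combination ((M t:ℂ) * p t + a t * (starRingEnd ℂ) (b t)) * Complex.I_sq
  have hA : HasDerivAt a (-Complex.I * ((M t : ℂ) * a t)) t :=
    ea ▸ (hda t).hasDerivAt
  have hB : HasDerivAt b (-Complex.I * (((M t : ℂ) + (P t : ℂ)) * b t +
      (P t : ℂ) * a t * (starRingEnd ℂ) (p t))) t := eb ▸ (hdb t).hasDerivAt
  have hPp : HasDerivAt p (-Complex.I * ((M t : ℂ) * p t +
      a t * (starRingEnd ℂ) (b t))) t := ep ▸ (hdp t).hasDerivAt
  set da := -Complex.I * ((M t : ℂ) * a t) with hda'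
  set db := -Complex.I * (((M t : ℂ) + (P t : ℂ)) * b t +
      (P t : ℂ) * a t * (starRingEnd ℂ) (p t)) with hdb'
  set dp := -Complex.I * ((M t : ℂ) * p t + a t * (starRingEnd ℂ) (b t)) with hdp'
  have hU : HasDerivAt (fun s => a s + b s * p s) (da + (db * p t + b t * dp)) t :=
    hA.add (hB.mul hPp)
  have hQd := normSq_hasDerivAt hU
  have hNd := normSq_hasDerivAt hPp
  have hBd := normSq_hasDerivAt hB
  have hDd : HasDerivAt (fun s => 1 - Complex.normSq (p s))
      (0 - 2 * (dp * (starRingEnd ℂ) (p t)).re) t := (hasDerivAt_const t (1:ℝ)).sub hNd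
  constructor
  · rw [hMfun]
    have hMd : HasDerivAt (fun s => Complex.normSq (b s) +
        Complex.normSq (a s + b s * p s) / (1 - Complex.normSq (p s))) _ t :=
      hBd.add (hQd.div hDd hne)
    rw [hMd.deriv]
    rw [hda', hdb', hdp']
    simp only [Complex.normSq_apply, Complex.mul_re, Complex.mul_im,
      Complex.add_re, Complex.add_im, Complex.neg_re, Complex.neg_im, Complex.I_re,
      Complex.I_im, Complex.ofReal_re, Complex.ofReal_im, Complex.conj_re, Complex.conj_im,
      Complex.sub_re, Complex.sub_im, Complex.one_re, Complex.one_im]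
    simp only [Complex.normSq_apply] at hne
    have hmc := hM t
    have hqc := hP t
    simp only [Complex.sq_norm, Complex.normSq_apply, Complex.add_re, Complex.add_im,
      Complex.mul_re, Complex.mul_im] at hmc hqc
    set ar := (a t).re; set ai := (a t).im; set br := (b t).re; set bi := (b t).im
    set pr := (p t).re; set pi := (p t).im; set m := M t; set q := P t
    clear_value ar ai br bi pr pi m q
    subst hmc hqc
    generalize hD : 1 - (pr * pr + pi * pi) = D at hne ⊢
    field_simp
    subst hD
    ring
  · rw [hPfun]
    have hD2 : HasDerivAt (fun s => (1 - Complex.normSq (p s)) ^ 2) _ t := hDd.pow 2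
    have hne2 : (1 - Complex.normSq (p t)) ^ 2 ≠ 0 := pow_ne_zero _ hne
    have hPd : HasDerivAt (fun s => Complex.normSq (a s + b s * p s) /
        (1 - Complex.normSq (p s)) ^ 2) _ t := hQd.div hD2 hne2
    rw [hPd.deriv]
    rw [hda', hdb', hdp']
    simp only [Complex.normSq_apply, Complex.mul_re, Complex.mul_im,
      Complex.add_re, Complex.add_im, Complex.neg_re, Complex.neg_im, Complex.I_re,
      Complex.I_im, Complex.ofReal_re, Complex.ofReal_im, Complex.conj_re, Complex.conj_im,
      Complex.sub_re, Complex.sub_im, Complex.one_re, Complex.one_im]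
    simp only [Complex.normSq_apply] at hne
    have hmc := hM t
    have hqc := hP t
    simp only [Complex.sq_norm, Complex.normSq_apply, Complex.add_re, Complex.add_im,
      Complex.mul_re, Complex.mul_im] at hmc hqc
    set ar := (a t).re; set ai := (a t).im; set br := (b t).re; set bi := (b t).im
    set pr := (p t).re; set pi := (p t).im; set m := M t; set q := P t
    clear_value ar ai br bi pr pi m q
    subst hmc hqc
    generalize hD : 1 - (pr * pr + pi * pi) = D at hne ⊢
    field_simp
    subst hD
    ring
end

section
/- For every n ∈ ℕ and |p| < 1, ∑_{j=0}^∞ ∑_{k=0}^{n+j} (min(n,j,k,n+j-k)+1) · k² · |p|^{2j} = n(n+1)(2n+1)/(6(1-|p|²)²) + (n+1)²|p|²/(1-|p|²)³ + 2(n+1)|p|⁴/(1-|p|²)⁴. -/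
open Finset

-- counting identity
lemma comb_aux (n j : ℕ) :
    ∑ a ∈ range (n+1), ∑ b ∈ range (j+1), (a+b)^2
      = ∑ k ∈ range (n+j+1), (min (min n j) (min k (n+j-k)) + 1) * k^2 := by
  have h1 : ∀ a ∈ range (n+1), ∑ b ∈ range (j+1), (a+b)^2
      = ∑ k ∈ range (n+j+1), if a ≤ k ∧ k < a + j + 1 then k^2 else 0 := by
    intro a ha
    simp only [mem_range] at ha
    rw [← Finset.sum_filter]
    have : Finset.filter (fun k => a ≤ k ∧ k < a + j + 1) (range (n+j+1))
        = Finset.Ico a (a+j+1) := by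
      ext k; simp only [mem_filter, mem_range, Finset.mem_Ico]; omega
    have e : a + j + 1 - a = j + 1 := by omega
    rw [this, Finset.sum_Ico_eq_sum_range, e]
  rw [Finset.sum_congr rfl h1, Finset.sum_comm]
  refine Finset.sum_congr rfl fun k hk => ?_
  simp only [mem_range] at hk
  rw [← Finset.sum_filter]
  have : Finset.filter (fun a => a ≤ k ∧ k < a + j + 1) (range (n+1))
      = Finset.Icc (k - j) (min n k) := by
    ext a; simp only [mem_filter, mem_range, Finset.mem_Icc]; omega
  rw [this, Finset.sum_const, Nat.card_Icc, smul_eq_mul]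
  congr 1
  omega

lemma sum_shift_sq (a j : ℕ) : ∑ b ∈ range (j+1), ((a:ℝ)+b)^2
    = ((j:ℝ)+1)*(a:ℝ)^2 + (a:ℝ)*((j:ℝ)*((j:ℝ)+1)) + (j:ℝ)*((j:ℝ)+1)*(2*(j:ℝ)+1)/6 := by
  induction j with
  | zero => simp
  | succ j ih =>
    rw [Finset.sum_range_succ, ih]
    push_cast
    ring

lemma dsum (n j : ℕ) : ∑ a ∈ range (n+1), ∑ b ∈ range (j+1), ((a:ℝ)+b)^2
    = ((j:ℝ)+1)*((n:ℝ)*((n:ℝ)+1)*(2*(n:ℝ)+1)/6) + ((n:ℝ)*((n:ℝ)+1)/2)*((j:ℝ)*((j:ℝ)+1))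
      + ((n:ℝ)+1)*((j:ℝ)*((j:ℝ)+1)*(2*(j:ℝ)+1)/6) := by
  induction n with
  | zero =>
    rw [Finset.sum_range_one]
    have := sum_shift_sq 0 j
    push_cast at this ⊢
    rw [this]; ring
  | succ n ih =>
    rw [Finset.sum_range_succ, ih, sum_shift_sq (n+1) j]
    push_cast
    ring

lemma choose2_real (j : ℕ) : (((j+2).choose 2 : ℕ) : ℝ) = ((j:ℝ)+1)*((j:ℝ)+2)/2 := by
  induction j with
  | zero => norm_num
  | succ j ih =>
    have : (j+1+2).choose 2 = (j+2).choose 1 + (j+2).choose 2 := Nat.choose_succ_succ _ _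
    rw [this]
    push_cast [Nat.choose_one_right, ih]
    ring

lemma choose3_real (j : ℕ) : (((j+3).choose 3 : ℕ) : ℝ) = ((j:ℝ)+1)*((j:ℝ)+2)*((j:ℝ)+3)/6 := by
  induction j with
  | zero => norm_num
  | succ j ih =>
    have : (j+1+3).choose 3 = (j+3).choose 2 + (j+3).choose 3 := Nat.choose_succ_succ _ _
    rw [this]
    have h2 := choose2_real (j+1)
    push_cast at h2
    push_cast [ih]
    rw [show ((j:ℝ)+1+2) = (j:ℝ)+3 by ring] at h2
    rw [h2]
    ring

lemma main_hasSum (n : ℕ) (q : ℝ) (hq0 : 0 ≤ q) (hq1 : q < 1) :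
    HasSum (fun j : ℕ => ∑ k ∈ Finset.range (n + j + 1),
        ((min (min n j) (min k (n + j - k)) + 1 : ℕ) : ℝ) * (k : ℝ) ^ 2 * q ^ j)
      ((n : ℝ) * ((n : ℝ) + 1) * (2 * (n : ℝ) + 1) / (6 * (1 - q) ^ 2) +
        ((n : ℝ) + 1) ^ 2 * q / (1 - q) ^ 3 +
        2 * ((n : ℝ) + 1) * q ^ 2 / (1 - q) ^ 4) := by
  have hne : (1:ℝ) - q ≠ 0 := by intro h; nlinarith
  have hqn : ‖q‖ < 1 := by rwa [Real.norm_eq_abs, abs_of_nonneg hq0]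
  have h3 := (hasSum_choose_mul_geometric_of_norm_lt_one 3 hqn).mul_left (2*((n:ℝ)+1))
  have h2 := (hasSum_choose_mul_geometric_of_norm_lt_one 2 hqn).mul_left
    ((n:ℝ)*((n:ℝ)+1) - 3*((n:ℝ)+1))
  have h1 := (hasSum_choose_mul_geometric_of_norm_lt_one 1 hqn).mul_left
    ((n:ℝ)*((n:ℝ)+1)*(2*(n:ℝ)+1)/6 - (n:ℝ)*((n:ℝ)+1) + ((n:ℝ)+1))
  have H := (h3.add h2).add h1
  convert H using 1
  · rfl
  · funext j
    have e1 : (∑ k ∈ Finset.range (n + j + 1),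
        ((min (min n j) (min k (n + j - k)) + 1 : ℕ) : ℝ) * (k:ℝ)^2 * q ^ j)
        = ((∑ k ∈ range (n+j+1), (min (min n j) (min k (n+j-k)) + 1) * k^2 : ℕ) : ℝ) * q^j := by
      rw [Nat.cast_sum, Finset.sum_mul]
      exact Finset.sum_congr rfl fun k _ => by push_cast; ring
    rw [e1, ← comb_aux]
    have e2 : ((∑ a ∈ range (n+1), ∑ b ∈ range (j+1), (a+b)^2 : ℕ) : ℝ)
        = ∑ a ∈ range (n+1), ∑ b ∈ range (j+1), ((a:ℝ)+b)^2 := by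
      push_cast; rfl
    rw [e2, dsum, choose3_real, choose2_real, Nat.choose_one_right]
    push_cast
    ring
  · field_simp
    ring

theorem stmt_13 (n : ℕ) (p : ℂ) (hp : ‖p‖ < 1) :
    HasSum (fun j : ℕ => ∑ k ∈ Finset.range (n + j + 1),
        ((min (min n j) (min k (n + j - k)) + 1 : ℕ) : ℝ) * (k : ℝ) ^ 2 * ‖p‖ ^ (2 * j))
      ((n : ℝ) * ((n : ℝ) + 1) * (2 * (n : ℝ) + 1) / (6 * (1 - ‖p‖ ^ 2) ^ 2) +
        ((n : ℝ) + 1) ^ 2 * ‖p‖ ^ 2 / (1 - ‖p‖ ^ 2) ^ 3 +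
        2 * ((n : ℝ) + 1) * ‖p‖ ^ 4 / (1 - ‖p‖ ^ 2) ^ 4) := by
  have h0 : (0:ℝ) ≤ ‖p‖ := norm_nonneg _
  have h := main_hasSum n (‖p‖ ^ 2) (by positivity) (by nlinarith)
  convert h using 2 with j
  · exact Finset.sum_congr rfl fun k _ => by rw [pow_mul]
  · rw [← pow_mul]
end

section
/- For every n ∈ ℕ and |p| < 1, ∑_{j=0}^∞ ∑_{k=0}^{n+j} (min(n,j,k,n+j-k)+1) · j·k · |p|^{2j} = (n+1)²|p|²/(1-|p|²)³ + 3(n+1)|p|⁴/(1-|p|²)⁴. -/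
open Finset

lemma aux_ch2 (j : ℕ) : 2 * ((j+2).choose 2) = (j+1)*(j+2) := by
  induction j with
  | zero => rfl
  | succ j IH =>
    have : (j+1+2).choose 2 = (j+2).choose 1 + (j+2).choose 2 := Nat.choose_succ_succ _ _
    rw [show j+1+2 = j+3 from rfl] at this
    rw [show j+1+2 = j+3 from rfl, this, Nat.mul_add, IH, Nat.choose_one_right]
    ring

lemma aux_ch3 (j : ℕ) : 6 * ((j+3).choose 3) = (j+1)*(j+2)*(j+3) := by
  induction j with
  | zero => rfl
  | succ j IH =>
    have h : (j+1+3).choose 3 = (j+3).choose 2 + (j+3).choose 3 := Nat.choose_succ_succ _ _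
    rw [show j+1+3 = j+4 from rfl] at h
    rw [show j+1+3 = j+4 from rfl, h, Nat.mul_add, IH,
      show 6 * ((j+3).choose 2) = 3 * (2 * ((j+1+2).choose 2)) from by ring_nf, aux_ch2]
    ring

lemma aux_sumA_le (n j : ℕ) (h : n ≤ j) :
    ∑ k ∈ range (n+j+1), (min (min n j) (min k (n+j-k)) + 1) = (n+1)*(j+1) := by
  rw [range_eq_Ico,
    ← Finset.sum_Ico_consecutive _ (Nat.zero_le n) (by omega : n ≤ n+j+1),
    ← Finset.sum_Ico_consecutive _ (by omega : n ≤ j+1) (by omega : j+1 ≤ n+j+1)]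
  have h1 : ∑ k ∈ Ico 0 n, (min (min n j) (min k (n+j-k)) + 1) = ∑ k ∈ range n, (k+1) := by
    rw [← range_eq_Ico]
    refine Finset.sum_congr rfl fun k hk => ?_
    simp only [mem_range] at hk; omega
  have h2 : ∑ k ∈ Ico n (j+1), (min (min n j) (min k (n+j-k)) + 1)
      = (j+1-n) * (n+1) := by
    rw [Finset.sum_congr rfl (fun k hk => ?_), Finset.sum_const, Nat.card_Ico, smul_eq_mul]
    simp only [mem_Ico] at hk
    show _ = n + 1
    omega
  have h3 : ∑ k ∈ Ico (j+1) (n+j+1), (min (min n j) (min k (n+j-k)) + 1)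
      = ∑ i ∈ range n, (n-i) := by
    rw [Finset.sum_Ico_eq_sum_range, show n+j+1-(j+1) = n from by omega]
    refine Finset.sum_congr rfl fun i hi => ?_
    simp only [mem_range] at hi; omega
  rw [h1, h2, h3]
  have h4 : ∑ k ∈ range n, (k+1) + ∑ i ∈ range n, (n-i) = n * (n+1) := by
    rw [← Finset.sum_add_distrib,
      Finset.sum_congr rfl (fun k hk => by simp only [mem_range] at hk; omega :
        ∀ k ∈ range n, k+1+(n-k) = n+1),
      Finset.sum_const, smul_eq_mul, card_range]
  calc ∑ k ∈ range n, (k+1) + ((j+1-n)*(n+1) + ∑ i ∈ range n, (n-i))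
      = (∑ k ∈ range n, (k+1) + ∑ i ∈ range n, (n-i)) + (j+1-n)*(n+1) := by ring
    _ = n * (n+1) + (j+1-n)*(n+1) := by rw [h4]
    _ = (n + (j+1-n)) * (n+1) := by ring
    _ = (n+1)*(j+1) := by rw [show n + (j+1-n) = j+1 from by omega]; ring

lemma aux_sumA (n j : ℕ) :
    ∑ k ∈ range (n+j+1), (min (min n j) (min k (n+j-k)) + 1) = (n+1)*(j+1) := by
  rcases le_total n j with h | h
  · exact aux_sumA_le n j h
  · have := aux_sumA_le j n h
    simp only [min_comm j n, add_comm j n] at this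
    rw [this]; ring

lemma aux_key (n j : ℕ) :
    2 * ∑ k ∈ range (n+j+1), (min (min n j) (min k (n+j-k)) + 1) * k
      = (n+1)*(j+1)*(n+j) := by
  set N := n + j with hN
  have hrefl : ∑ k ∈ range (N+1), (min (min n j) (min k (N-k)) + 1) * k
      = ∑ k ∈ range (N+1), (min (min n j) (min (N-k) (N-(N-k))) + 1) * (N-k) := by
    exact (Finset.sum_range_reflect (fun k => (min (min n j) (min k (N-k)) + 1) * k) (N+1)).symm
  have hcongr : ∑ k ∈ range (N+1), (min (min n j) (min (N-k) (N-(N-k))) + 1) * (N-k)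
      = ∑ k ∈ range (N+1), (min (min n j) (min k (N-k)) + 1) * (N-k) := by
    refine Finset.sum_congr rfl fun k hk => ?_
    simp only [mem_range] at hk
    congr 2
    omega
  calc 2 * ∑ k ∈ range (N+1), (min (min n j) (min k (N-k)) + 1) * k
      = ∑ k ∈ range (N+1), (min (min n j) (min k (N-k)) + 1) * k
        + ∑ k ∈ range (N+1), (min (min n j) (min k (N-k)) + 1) * k := by ring
    _ = ∑ k ∈ range (N+1), ((min (min n j) (min k (N-k)) + 1) * k
        + (min (min n j) (min k (N-k)) + 1) * (N-k)) := by
        nth_rewrite 2 [hrefl.trans hcongr]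
        rw [← Finset.sum_add_distrib]
    _ = ∑ k ∈ range (N+1), (min (min n j) (min k (N-k)) + 1) * N := by
        refine Finset.sum_congr rfl fun k hk => ?_
        simp only [mem_range] at hk
        rw [← Nat.mul_add]
        congr 1
        omega
    _ = (∑ k ∈ range (N+1), (min (min n j) (min k (N-k)) + 1)) * N := by
        rw [← Finset.sum_mul]
    _ = (n+1)*(j+1)*(n+j) := by rw [aux_sumA]

theorem stmt_14 (n : ℕ) (p : ℂ) (hp : ‖p‖ < 1) :
    HasSum (fun j : ℕ => ∑ k ∈ Finset.range (n + j + 1),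
        ((min (min n j) (min k (n + j - k)) + 1 : ℕ) : ℝ) * ((j : ℝ) * (k : ℝ)) *
          ‖p‖ ^ (2 * j))
      (((n : ℝ) + 1) ^ 2 * ‖p‖ ^ 2 / (1 - ‖p‖ ^ 2) ^ 3 +
        3 * ((n : ℝ) + 1) * ‖p‖ ^ 4 / (1 - ‖p‖ ^ 2) ^ 4) := by 
  set r : ℝ := ‖p‖ with hr
  set x : ℝ := r ^ 2 with hx
  have hr0 : 0 ≤ r := norm_nonneg _
  have hx1 : x < 1 := by
    rw [hx]
    nlinarith
  have hx0 : 0 ≤ x := sq_nonneg r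
  have hxn : ‖x‖ < 1 := by rwa [Real.norm_eq_abs, abs_of_nonneg hx0]
  have h1x : (1 : ℝ) - x ≠ 0 := by linarith
  set m : ℝ := (n : ℝ) with hm
  set a1 : ℝ := (m+1)*(2-m) with ha1
  set a2 : ℝ := (m+1)*(m-5) with ha2
  set a3 : ℝ := 3*(m+1) with ha3
  have H1 := hasSum_choose_mul_geometric_of_norm_lt_one (𝕜 := ℝ) 1 hxn
  have H2 := hasSum_choose_mul_geometric_of_norm_lt_one (𝕜 := ℝ) 2 hxn
  have H3 := hasSum_choose_mul_geometric_of_norm_lt_one (𝕜 := ℝ) 3 hxn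
  have key := ((H1.mul_left a1).add (H2.mul_left a2)).add (H3.mul_left a3)
  have hfun : (fun j : ℕ => ∑ k ∈ Finset.range (n + j + 1),
        ((min (min n j) (min k (n + j - k)) + 1 : ℕ) : ℝ) * ((j : ℝ) * (k : ℝ)) *
          r ^ (2 * j))
      = fun j : ℕ => a1 * (((j+1).choose 1 : ℝ) * x ^ j) + a2 * (((j+2).choose 2 : ℝ) * x ^ j)
          + a3 * (((j+3).choose 3 : ℝ) * x ^ j) := by
    funext j
    have hS : ((∑ k ∈ range (n+j+1), (min (min n j) (min k (n+j-k)) + 1) * k : ℕ) : ℝ)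
        = (m+1)*((j:ℝ)+1)*(m+(j:ℝ))/2 := by
      have := aux_key n j
      have h2 : 2 * ((∑ k ∈ range (n+j+1), (min (min n j) (min k (n+j-k)) + 1) * k : ℕ) : ℝ)
          = ((n:ℝ)+1)*((j:ℝ)+1)*((n:ℝ)+(j:ℝ)) := by exact_mod_cast this
      rw [hm]
      linarith
    have hC1 : (((j+1).choose 1 : ℕ) : ℝ) = (j:ℝ)+1 := by
      rw [Nat.choose_one_right]; push_cast; ring
    have hC2 : (((j+2).choose 2 : ℕ) : ℝ) = ((j:ℝ)+1)*((j:ℝ)+2)/2 := by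
      have := aux_ch2 j
      have h2 : 2 * (((j+2).choose 2 : ℕ) : ℝ) = ((j:ℝ)+1)*((j:ℝ)+2) := by exact_mod_cast this
      linarith
    have hC3 : (((j+3).choose 3 : ℕ) : ℝ) = ((j:ℝ)+1)*((j:ℝ)+2)*((j:ℝ)+3)/6 := by
      have := aux_ch3 j
      have h2 : 6 * (((j+3).choose 3 : ℕ) : ℝ) = ((j:ℝ)+1)*((j:ℝ)+2)*((j:ℝ)+3) := by
        exact_mod_cast this
      linarith
    have hpow : ∀ k, ((min (min n j) (min k (n + j - k)) + 1 : ℕ) : ℝ) * ((j : ℝ) * (k : ℝ))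
          * r ^ (2 * j)
        = (((min (min n j) (min k (n + j - k)) + 1) * k : ℕ) : ℝ) * ((j:ℝ) * x ^ j) := by
      intro k
      rw [hx, ← pow_mul]
      push_cast
      ring
    rw [Finset.sum_congr rfl (fun k _ => hpow k), ← Finset.sum_mul, ← Nat.cast_sum, hS,
      hC1, hC2, hC3]
    ring
  rw [hfun]
  convert key using 1
  · rfl
  have hval : ∀ k : ℕ, (1:ℝ) / (1-x)^(k+1) = 1 / (1-x)^(k+1) := fun _ => rfl
  rw [show ((n : ℝ) + 1) = m + 1 from rfl]
  field_simp
  ring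
end

section
/- Let Q, E, S be real numbers with S ≥ 0, Q ≥ 2S, E > 0, and suppose y₋ ≤ y₊ are the two real roots of the quadratic y² + (1 - E(Q+2S)/(Q²+12S²)) y + (E-Q-2S)²/(4(Q²+12S²)) = 0, both ≥ 0. Then (1+y₊)/(1+y₋) ≤ 16. -/
set_option maxHeartbeats 800000


theorem stmt_16 (Q E S ym yp : ℝ) (hS : 0 ≤ S) (hQ : 2 * S ≤ Q) (hQpos : 0 < Q)
    (hE : 0 < E) (hle : ym ≤ yp) (hm : 0 ≤ ym) (hp : 0 ≤ yp)
    (hrootm : ym ^ 2 + (1 - E * (Q + 2 * S) / (Q ^ 2 + 12 * S ^ 2)) * ym +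
      (E - Q - 2 * S) ^ 2 / (4 * (Q ^ 2 + 12 * S ^ 2)) = 0)
    (hrootp : yp ^ 2 + (1 - E * (Q + 2 * S) / (Q ^ 2 + 12 * S ^ 2)) * yp +
      (E - Q - 2 * S) ^ 2 / (4 * (Q ^ 2 + 12 * S ^ 2)) = 0)
    (hvieta_sum : yp + ym = E * (Q + 2 * S) / (Q ^ 2 + 12 * S ^ 2) - 1)
    (hvieta_prod : yp * ym = (E - Q - 2 * S) ^ 2 / (4 * (Q ^ 2 + 12 * S ^ 2))) :
    (1 + yp) / (1 + ym) ≤ 16 := by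
  set u := 1 + yp with hu
  set v := 1 + ym with hv
  have hD : (0:ℝ) < Q ^ 2 + 12 * S ^ 2 := by positivity
  have hA : (0:ℝ) < Q + 2 * S := by linarith
  have hA2 : Q ^ 2 + 12 * S ^ 2 ≤ (Q + 2 * S) ^ 2 := by nlinarith [mul_nonneg hS (sub_nonneg.2 hQ)]
  have hA3 : (Q + 2 * S) ^ 2 ≤ 3 * (Q ^ 2 + 12 * S ^ 2) := by nlinarith [sq_nonneg (Q - S)]
  have hsum : u + v = (Q ^ 2 + 12 * S ^ 2 + E * (Q + 2 * S)) / (Q ^ 2 + 12 * S ^ 2) := by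
    have h2 : u + v = 2 + (yp + ym) := by rw [hu, hv]; ring
    rw [h2, hvieta_sum]
    field_simp
    ring
  have hprod : u * v = (E + (Q + 2 * S)) ^ 2 / (4 * (Q ^ 2 + 12 * S ^ 2)) := by
    have h1 : u * v = 1 + (yp + ym) + yp * ym := by rw [hu, hv]; ring
    rw [h1, hvieta_sum, hvieta_prod]
    field_simp
    ring
  have hkey : 16 * (u + v) ^ 2 ≤ 289 * (u * v) := by
    rw [hsum, hprod]
    rw [div_pow, ← mul_div_assoc, ← mul_div_assoc, div_le_div_iff₀ (by positivity) (by positivity)]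
    have h1 : 0 ≤ E ^ 2 * (289 * (Q ^ 2 + 12 * S ^ 2) - 64 * (Q + 2 * S) ^ 2) := by nlinarith
    have h2 : 0 ≤ (Q ^ 2 + 12 * S ^ 2) * (289 * (Q + 2 * S) ^ 2 - 64 * (Q ^ 2 + 12 * S ^ 2)) := by
      nlinarith
    have h3 : 0 ≤ (Q ^ 2 + 12 * S ^ 2) * ((Q + 2 * S) * E) := by positivity
    nlinarith [mul_nonneg hD.le h1, mul_nonneg hD.le h2, mul_nonneg hD.le h3]
  have hv1 : (1:ℝ) ≤ v := by rw [hv]; linarith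
  have huv : v ≤ u := by rw [hu, hv]; linarith
  rw [div_le_iff₀ (by linarith)]
  nlinarith [hkey, mul_le_mul_of_nonneg_left huv (by linarith : (0:ℝ) ≤ 15 + v)]
end

section
/- Suppose b, a, p : ℝ → ℂ (|p| < 1) satisfy the three-dimensional conformal flow ODEs i ṗ/(1+y)² = (p/6)(2y|a|² + conj(b)a) and i ȧ/(1+y)² = (a/6)(5|b|² + (18y²+4y)|a|² + (6y-1)conj(b)a + 10y conj(a)b), with y = |p|²/(1-|p|²). Then S = |a|² y (1+y)³ is constant in time. -/
open Complex

lemma sq_abs_hasDerivAt (f : ℝ → ℂ) (f' : ℂ) (t : ℝ) (hf : HasDerivAt f f' t) :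
    HasDerivAt (fun s => ‖f s‖ ^ 2) (2 * ((starRingEnd ℂ) (f t) * f').re) t := by
  have h1 : HasDerivAt (fun s => f s * (starRingEnd ℂ) (f s))
      (f' * (starRingEnd ℂ) (f t) + f t * (starRingEnd ℂ) f') t := hf.mul hf.star
  have h2 := Complex.reCLM.hasFDerivAt.comp_hasDerivAt t h1
  have heq : (fun s => ‖f s‖ ^ 2) =
      (fun s => Complex.reCLM (f s * (starRingEnd ℂ) (f s))) := by
    funext s
    simp [Complex.mul_conj, Complex.sq_norm]
  rw [heq]
  refine h2.congr_deriv ?_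
  simp [Complex.mul_re, Complex.add_re]
  ring

theorem stmt_18 (b a p : ℝ → ℂ) (y : ℝ → ℝ)
    (hdb : Differentiable ℝ b) (hda : Differentiable ℝ a) (hdp : Differentiable ℝ p)
    (hpbound : ∀ t : ℝ, ‖p t‖ < 1)
    (hy : ∀ t : ℝ, y t = ‖p t‖ ^ 2 / (1 - ‖p t‖ ^ 2))
    (hpeq : ∀ t : ℝ,
      Complex.I * deriv p t / ((1 + y t : ℝ) : ℂ) ^ 2 =
        (p t / 6) * (2 * (y t : ℂ) * (‖a t‖ : ℂ) ^ 2 +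
          (starRingEnd ℂ) (b t) * a t))
    (haeq : ∀ t : ℝ,
      Complex.I * deriv a t / ((1 + y t : ℝ) : ℂ) ^ 2 =
        (a t / 6) * (5 * (‖b t‖ : ℂ) ^ 2 +
          ((18 * (y t) ^ 2 + 4 * y t : ℝ) : ℂ) * (‖a t‖ : ℂ) ^ 2 +
          ((6 * y t - 1 : ℝ) : ℂ) * (starRingEnd ℂ) (b t) * a t +
          10 * (y t : ℂ) * (starRingEnd ℂ) (a t) * b t)) :
    ∀ t : ℝ, deriv (fun s : ℝ => ‖a s‖ ^ 2 * y s * (1 + y s) ^ 3) t = 0 := by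
  intro t
  -- basic positivity facts
  have hq1 : ‖p t‖ ^ 2 < 1 := by
    have := hpbound t
    nlinarith [norm_nonneg (p t)]
  have h1q : (0:ℝ) < 1 - ‖p t‖ ^ 2 := by linarith
  have hYpos : (0:ℝ) < 1 + y t := by
    rw [hy t]
    have h0 : (0:ℝ) ≤ ‖p t‖ ^ 2 := sq_nonneg _
    have : (0:ℝ) ≤ ‖p t‖ ^ 2 / (1 - ‖p t‖ ^ 2) :=
      div_nonneg h0 (le_of_lt h1q)
    linarith
  have hc : ((1 + y t : ℝ) : ℂ) ≠ 0 := by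
    rw [Ne, Complex.ofReal_eq_zero]
    exact ne_of_gt hYpos
  -- solve the ODEs for the derivatives
  have hpD : 6 * deriv p t = -Complex.I * (((1 + y t : ℝ) : ℂ)^2 *
      (p t * (2 * (y t : ℂ) * (‖a t‖ : ℂ) ^ 2 + (starRingEnd ℂ) (b t) * a t))) := by
    have h := hpeq t
    rw [div_eq_iff (pow_ne_zero 2 hc)] at h
    linear_combination (-Complex.I) * 6 * h + 6 * deriv p t * Complex.I_sq
  have haD : 6 * deriv a t = -Complex.I * (((1 + y t : ℝ) : ℂ)^2 *
      (a t * (5 * (‖b t‖ : ℂ) ^ 2 +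
          ((18 * (y t) ^ 2 + 4 * y t : ℝ) : ℂ) * (‖a t‖ : ℂ) ^ 2 +
          ((6 * y t - 1 : ℝ) : ℂ) * (starRingEnd ℂ) (b t) * a t +
          10 * (y t : ℂ) * (starRingEnd ℂ) (a t) * b t))) := by
    have h := haeq t
    rw [div_eq_iff (pow_ne_zero 2 hc)] at h
    linear_combination (-Complex.I) * 6 * h + 6 * deriv a t * Complex.I_sq
  -- derivative of |p|^2
  have hqd : HasDerivAt (fun s => ‖p s‖ ^ 2)
      (2 * ((starRingEnd ℂ) (p t) * deriv p t).re) t :=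
    sq_abs_hasDerivAt p _ t (hdp t).hasDerivAt
  have hqval : 2 * ((starRingEnd ℂ) (p t) * deriv p t).re =
      (1 + y t)^2 * (‖p t‖ ^ 2) / 3 * ((starRingEnd ℂ) (b t) * a t).im := by
    have key : ((starRingEnd ℂ) (p t) * (6 * deriv p t)).re =
        3 * ((1 + y t)^2 * (‖p t‖ ^ 2) / 3 * ((starRingEnd ℂ) (b t) * a t).im) := by
      rw [hpD]
      rw [show (‖p t‖ : ℝ)^2 = Complex.normSq (p t) from Complex.sq_norm _,
        Complex.normSq_apply]
      rw [show ((‖a t‖ : ℂ))^2 = ((‖a t‖ ^ 2 : ℝ) : ℂ) by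
        push_cast; ring]
      simp only [pow_two, Complex.mul_re, Complex.mul_im, Complex.neg_re, Complex.neg_im,
        Complex.I_re, Complex.I_im, Complex.add_re, Complex.add_im, Complex.ofReal_re,
        Complex.ofReal_im, Complex.conj_re, Complex.conj_im, Complex.re_ofNat,
        Complex.im_ofNat, Complex.one_re, Complex.one_im]
      ring
    have expand : ((starRingEnd ℂ) (p t) * (6 * deriv p t)).re =
        6 * ((starRingEnd ℂ) (p t) * deriv p t).re := by
      simp [Complex.mul_re, Complex.mul_im]; ring
    rw [expand] at key
    linarith
  -- derivative of |a|^2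
  have hAd : HasDerivAt (fun s => ‖a s‖ ^ 2)
      (2 * ((starRingEnd ℂ) (a t) * deriv a t).re) t :=
    sq_abs_hasDerivAt a _ t (hda t).hasDerivAt
  have hAval : 2 * ((starRingEnd ℂ) (a t) * deriv a t).re =
      -((1 + y t)^2 * (‖a t‖ ^ 2) * (4 * y t + 1) / 3 *
        ((starRingEnd ℂ) (b t) * a t).im) := by
    have key : ((starRingEnd ℂ) (a t) * (6 * deriv a t)).re =
        3 * (-((1 + y t)^2 * (‖a t‖ ^ 2) * (4 * y t + 1) / 3 *
          ((starRingEnd ℂ) (b t) * a t).im)) := by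
      rw [haD]
      rw [show (‖a t‖ : ℝ)^2 = Complex.normSq (a t) from Complex.sq_norm _,
        Complex.normSq_apply]
      rw [show ((‖a t‖ : ℂ))^2 = (((a t).re * (a t).re + (a t).im * (a t).im : ℝ) : ℂ) by
        push_cast
        rw [show ((‖a t‖ : ℂ))^2 = ((Complex.normSq (a t) : ℝ) : ℂ) by
          push_cast [← Complex.sq_norm]; ring]
        rw [Complex.normSq_apply]; push_cast; ring]
      rw [show ((‖b t‖ : ℂ))^2 = (((b t).re * (b t).re + (b t).im * (b t).im : ℝ) : ℂ) by
        rw [show ((‖b t‖ : ℂ))^2 = ((Complex.normSq (b t) : ℝ) : ℂ) by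
          push_cast [← Complex.sq_norm]; ring]
        rw [Complex.normSq_apply]]
      simp only [pow_two, Complex.mul_re, Complex.mul_im, Complex.neg_re, Complex.neg_im,
        Complex.I_re, Complex.I_im, Complex.add_re, Complex.add_im, Complex.sub_re,
        Complex.sub_im, Complex.ofReal_re, Complex.ofReal_im, Complex.conj_re,
        Complex.conj_im, Complex.re_ofNat, Complex.im_ofNat, Complex.one_re, Complex.one_im]
      ring
    have expand : ((starRingEnd ℂ) (a t) * (6 * deriv a t)).re =
        6 * ((starRingEnd ℂ) (a t) * deriv a t).re := by
      simp [Complex.mul_re, Complex.mul_im]; ring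
    rw [expand] at key
    linarith
  -- derivative of y
  have hyfun : y = fun s => ‖p s‖ ^ 2 / (1 - ‖p s‖ ^ 2) :=
    funext hy
  have hyd : HasDerivAt y
      ((2 * ((starRingEnd ℂ) (p t) * deriv p t).re * (1 - ‖p t‖ ^ 2) -
        ‖p t‖ ^ 2 * (0 - 2 * ((starRingEnd ℂ) (p t) * deriv p t).re)) /
        (1 - ‖p t‖ ^ 2) ^ 2) t := by
    rw [hyfun]
    exact hqd.div ((hasDerivAt_const t (1:ℝ)).sub hqd) (ne_of_gt h1q)
  -- derivative of the conserved quantity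
  have hSd : HasDerivAt (fun s : ℝ => ‖a s‖ ^ 2 * y s * (1 + y s) ^ 3)
      ((2 * ((starRingEnd ℂ) (a t) * deriv a t).re * y t +
        ‖a t‖ ^ 2 *
          ((2 * ((starRingEnd ℂ) (p t) * deriv p t).re * (1 - ‖p t‖ ^ 2) -
            ‖p t‖ ^ 2 * (0 - 2 * ((starRingEnd ℂ) (p t) * deriv p t).re)) /
            (1 - ‖p t‖ ^ 2) ^ 2)) * (1 + y t) ^ 3 +
        ‖a t‖ ^ 2 * y t *
          (3 * (1 + y t) ^ (3 - 1) *
            (0 + (2 * ((starRingEnd ℂ) (p t) * deriv p t).re * (1 - ‖p t‖ ^ 2) -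
              ‖p t‖ ^ 2 * (0 - 2 * ((starRingEnd ℂ) (p t) * deriv p t).re)) /
              (1 - ‖p t‖ ^ 2) ^ 2))) t := by
    exact (hAd.mul hyd).mul (((hasDerivAt_const t (1:ℝ)).add hyd).pow 3)
  rw [hSd.deriv]
  rw [hqval, hAval, hy t]
  have hne : (1 - ‖p t‖ ^ 2) ≠ 0 := ne_of_gt h1q
  field_simp
  ring_nf
  field_simp
  ring
end

section
/- Suppose p : ℝ → ℂ with |p| < 1 satisfies i ṗ/(1+y)² = (p/6)(2y|a|² + conj(b)a) where y = |p|²/(1-|p|²) and a, b : ℝ → ℂ are differentiable. Then ẏ = (1/3) y (1+y)³ Im(conj(b) a). -/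
open Complex

theorem stmt_19 (b a p : ℝ → ℂ) (y : ℝ → ℝ)
    (hdb : Differentiable ℝ b) (hda : Differentiable ℝ a) (hdp : Differentiable ℝ p)
    (hpbound : ∀ t : ℝ, ‖p t‖ < 1)
    (hy : ∀ t : ℝ, y t = ‖p t‖ ^ 2 / (1 - ‖p t‖ ^ 2))
    (hpeq : ∀ t : ℝ,
      Complex.I * deriv p t / ((1 + y t : ℝ) : ℂ) ^ 2 =
        (p t / 6) * (2 * (y t : ℂ) * (‖a t‖ : ℂ) ^ 2 +
          (starRingEnd ℂ) (b t) * a t)) :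
    ∀ t : ℝ, deriv y t = (1 / 3) * y t * (1 + y t) ^ 3 * ((starRingEnd ℂ) (b t) * a t).im := by
  intro t
  have habs : ∀ s, ‖p s‖ ^ 2 = Complex.normSq (p s) := fun s => Complex.sq_norm _
  have hrlt : ∀ s, Complex.normSq (p s) < 1 := by
    intro s
    rw [← habs]
    nlinarith [hpbound s, norm_nonneg (p s)]
  have hrnn : ∀ s, 0 ≤ Complex.normSq (p s) := fun s => Complex.normSq_nonneg _
  have hne : ∀ s, 1 - Complex.normSq (p s) ≠ 0 := fun s => by nlinarith [hrlt s]
  have hyval : ∀ s, y s = Complex.normSq (p s) / (1 - Complex.normSq (p s)) := by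
    intro s; rw [hy s, habs s]
  have hynn : 0 ≤ y t := by
    rw [hyval t]
    exact div_nonneg (hrnn t) (by nlinarith [hrlt t])
  -- derivative of p at t
  have hp : HasDerivAt p (deriv p t) t := (hdp t).hasDerivAt
  set p' := deriv p t with hp'def
  have hre : HasDerivAt (fun s => (p s).re) p'.re t :=
    Complex.reCLM.hasFDerivAt.comp_hasDerivAt t hp
  have him : HasDerivAt (fun s => (p s).im) p'.im t :=
    Complex.imCLM.hasFDerivAt.comp_hasDerivAt t hp
  have hr : HasDerivAt (fun s => Complex.normSq (p s))
      (2 * ((p t).re * p'.re + (p t).im * p'.im)) t := by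
    have := (hre.mul hre).add (him.mul him)
    simp only [Complex.normSq_apply]
    exact this.congr_deriv (by ring)
  have hyd : HasDerivAt y
      ((2 * ((p t).re * p'.re + (p t).im * p'.im)) / (1 - Complex.normSq (p t)) ^ 2) t := by
    have h1 : HasDerivAt (fun s => 1 - Complex.normSq (p s))
        (-(2 * ((p t).re * p'.re + (p t).im * p'.im))) t := by
      exact ((hasDerivAt_const t (1:ℝ)).sub hr).congr_deriv (by ring)
    have := hr.div h1 (hne t)
    have heq : y = fun s => Complex.normSq (p s) / (1 - Complex.normSq (p s)) :=
      funext hyval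
    rw [heq]
    exact this.congr_deriv (by rw [div_left_inj' (pow_ne_zero 2 (hne t))]; ring)
  -- extract p'
  have hc : ((1 + y t : ℝ) : ℂ) ≠ 0 := by
    exact_mod_cast (by positivity : (0:ℝ) < 1 + y t).ne'
  set z := (starRingEnd ℂ) (b t) * a t with hz
  have hp'eq : p' = -Complex.I * ((1 + y t : ℝ) : ℂ) ^ 2 *
      ((p t / 6) * (2 * (y t : ℂ) * (‖a t‖ : ℂ) ^ 2 + z)) := by
    have h := hpeq t
    rw [div_eq_iff (pow_ne_zero 2 hc)] at h
    linear_combination (-Complex.I) * h + deriv p t * Complex.I_sq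
  have hconj : (starRingEnd ℂ) (p t) * p' =
      -Complex.I * (((1 + y t) ^ 2 * Complex.normSq (p t) / 6 : ℝ) : ℂ) *
        (2 * (y t : ℂ) * (‖a t‖ : ℂ) ^ 2 + z) := by
    rw [hp'eq]
    have : ((Complex.normSq (p t) : ℝ) : ℂ) = (starRingEnd ℂ) (p t) * p t :=
      Complex.normSq_eq_conj_mul_self
    push_cast
    rw [this]
    ring
  have hkey : (p t).re * p'.re + (p t).im * p'.im =
      (1 + y t) ^ 2 * Complex.normSq (p t) / 6 * z.im := by
    have h := congrArg Complex.re hconj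
    simp only [Complex.mul_re, Complex.mul_im, Complex.conj_re, Complex.conj_im,
      Complex.neg_re, Complex.neg_im, Complex.I_re, Complex.I_im, Complex.ofReal_re,
      Complex.ofReal_im, Complex.add_re, Complex.add_im, Complex.ofReal_mul,
      Complex.mul_re, Complex.mul_im, Complex.re_ofNat, Complex.im_ofNat,
      Complex.ofReal_pow] at h
    have him0 : ((‖a t‖ : ℂ) ^ 2).im = 0 := by
      rw [← Complex.ofReal_pow, Complex.ofReal_im]
    have hre0 : ((‖a t‖ : ℂ) ^ 2).re = ‖a t‖ ^ 2 := by
      rw [← Complex.ofReal_pow, Complex.ofReal_re]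
    rw [him0, hre0] at h
    nlinarith [h]
  -- finish
  rw [hyd.deriv, hkey, hyval t]
  have h1 : (1 : ℝ) - Complex.normSq (p t) ≠ 0 := hne t
  field_simp
  ring
end
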